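/- arXiv:2305.08331 — 3 statements merged into one kernel-verified Lean document; each statement's English description precedes it below -/
import Mathlib

section
/- Let H be a C4-free Halin graph with characteristic tree T, and let L = (v0, v1, …, vk) be a longest path in T. Then each semi-pendant vertex of L is a branching vertex of T adjacent to exactly two leaves of T; in particular, v1 has exactly two leaf neighbors (one of which is v0), its only non-leaf neighbor is v2, and d_T(v1) = 3, and symmetrically for v_{k−1}. -/
open SimpleGraph

/-- Degree of a vertex as the `ncard` of its neighbour set. -/
noncomputable def ncDeg {V : Type*} (G : SimpleGraph V) (v : V) : ℕ :=
  (G.neighborSet v).ncard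

/-- A leaf is a vertex of degree one. -/
def IsLeaf {V : Type*} (G : SimpleGraph V) (v : V) : Prop :=
  ncDeg G v = 1

/-- A Halin graph, presented by its characteristic tree `T` and outer cycle `C`.
The underlying graph is `T ⊔ C`.  The outer cycle is a `2`-regular connected graph
whose support is exactly the set of leaves of `T`, every non-leaf of `T` has degree
at least three, and the cycle is compatible with a planar embedding: for every edge
`uv` of `T`, the leaves lying in each component of `T - uv` are consecutive on the
cycle, i.e. they induce a connected subgraph of the cycle. -/
structure HalinGraph (V : Type*) [Fintype V] : Type _ where
  /-- the characteristic tree -/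
  T : SimpleGraph V
  /-- the outer cycle -/
  C : SimpleGraph V
  tree_isTree : T.IsTree
  four_le_card : 4 ≤ Fintype.card V
  nonleaf_degree : ∀ v : V, ¬ IsLeaf T v → 3 ≤ ncDeg T v
  support_C : C.support = {v : V | IsLeaf T v}
  two_regular : ∀ v ∈ C.support, ncDeg C v = 2
  cycle_connected : (C.induce C.support).Connected
  planar : ∀ u v : V, T.Adj u v →
    (C.induce {x : V | IsLeaf T x ∧ (T.deleteEdges {s(u, v)}).Reachable u x}).Connected

/-- The Halin graph itself: the (edge-disjoint) union of the tree and the outer cycle. -/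
def HalinGraph.graph {V : Type*} [Fintype V] (H : HalinGraph V) : SimpleGraph V :=
  H.T ⊔ H.C

/-- Number of edges of a graph. -/
noncomputable def eCount {V : Type*} (G : SimpleGraph V) : ℕ :=
  G.edgeSet.ncard

/-- A graph is `C₄`-free iff it contains no cycle of length `4`. -/
def C4Free {V : Type*} (G : SimpleGraph V) : Prop :=
  ∀ (v : V) (w : G.Walk v v), w.IsCycle → w.length ≠ 4

/-- A semi-branching vertex of the characteristic tree: a non-leaf with at least one
leaf neighbour and at least two non-leaf neighbours. -/
def SemiBranching {V : Type*} (T : SimpleGraph V) (v : V) : Prop :=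
  ¬ IsLeaf T v ∧ (∃ x, T.Adj v x ∧ IsLeaf T x) ∧
    ∃ x y : V, x ≠ y ∧ T.Adj v x ∧ T.Adj v y ∧ ¬ IsLeaf T x ∧ ¬ IsLeaf T y


lemma nbr_mem_support {V : Type*} [DecidableEq V] {T : SimpleGraph V} (hT : T.IsTree) {a b c : V}
    {p : T.Walk a b} (hp : p.IsPath) (hadj : T.Adj a c) (hc : c ∈ p.support) :
    c = p.getVert 1 := by
  have hq : (p.takeUntil c hc).IsPath := hp.takeUntil hc
  have hsingle : (Walk.cons hadj Walk.nil : T.Walk a c).IsPath := by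
    simp [hadj.ne]
  have heq : p.takeUntil c hc = Walk.cons hadj Walk.nil :=
    (hT.existsUnique_path a c).unique hq hsingle
  have hspec := p.take_spec hc
  rw [heq] at hspec
  rw [← hspec]
  simp [Walk.cons_append, Walk.nil_append, Walk.getVert_cons_succ, Walk.getVert_zero]

lemma getVert_mem_support' {V : Type*} {G : SimpleGraph V} {u v : V} (p : G.Walk u v)
    {n : ℕ} (hn : n ≤ p.length) : p.getVert n ∈ p.support :=
  Walk.mem_support_iff_exists_getVert.mpr ⟨n, rfl, hn⟩

lemma path_getVert_inj {V : Type*} {G : SimpleGraph V} {u v : V} {p : G.Walk u v}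
    (hp : p.IsPath) : ∀ {i j : ℕ}, i ≤ p.length → j ≤ p.length →
      p.getVert i = p.getVert j → i = j := by
  induction p with
  | nil => intro i j hi hj _; simp at hi hj; omega
  | cons h q ih =>
    rw [Walk.cons_isPath_iff] at hp
    intro i j hi hj hij
    match i, j with
    | 0, 0 => rfl
    | 0, (j+1) =>
      exfalso
      rw [Walk.getVert_zero, Walk.getVert_cons_succ] at hij
      exact hp.2 (hij ▸ getVert_mem_support' q (by simpa using hj))
    | (i+1), 0 =>
      exfalso
      rw [Walk.getVert_zero, Walk.getVert_cons_succ] at hij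
      exact hp.2 (hij ▸ getVert_mem_support' q (by simpa using hi))
    | (i+1), (j+1) =>
      rw [Walk.getVert_cons_succ, Walk.getVert_cons_succ] at hij
      have := ih hp.1 (by simpa using hi) (by simpa using hj) hij
      omega

lemma nbr_start_eq {V : Type*} [DecidableEq V] {T : SimpleGraph V} (hT : T.IsTree)
    {v0 vk : V} (L : T.Walk v0 vk) (hL : L.IsPath)
    (hlong : ∀ (a b : V) (p : T.Walk a b), p.IsPath → p.length ≤ L.length)
    {c : V} (hadj : T.Adj v0 c) : c = L.getVert 1 := by
  by_cases hc : c ∈ L.support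
  · exact nbr_mem_support hT hL hadj hc
  · exfalso
    have hp : (Walk.cons hadj.symm L).IsPath := hL.cons hc
    have := hlong _ _ _ hp
    simp [Walk.length_cons] at this

lemma leaf_nbrSet {V : Type*} {T : SimpleGraph V} {w u : V} (hw : IsLeaf T w)
    (h : T.Adj w u) : T.neighborSet w = {u} := by
  obtain ⟨a, ha⟩ := Set.ncard_eq_one.mp hw
  have : u ∈ T.neighborSet w := h
  rw [ha] at this ⊢
  simp_all

lemma start_leaf {V : Type*} [DecidableEq V] {T : SimpleGraph V} (hT : T.IsTree)
    {v0 vk : V} (L : T.Walk v0 vk) (hL : L.IsPath)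
    (hlong : ∀ (a b : V) (p : T.Walk a b), p.IsPath → p.length ≤ L.length)
    (h1 : 1 ≤ L.length) :
    T.neighborSet v0 = {L.getVert 1} ∧ IsLeaf T v0 := by
  have hadj : T.Adj v0 (L.getVert 1) := by
    simpa using L.adj_getVert_succ (show 0 < L.length from h1)
  have hset : T.neighborSet v0 = {L.getVert 1} := by
    apply Set.eq_singleton_iff_unique_mem.mpr
    exact ⟨hadj, fun c hc => nbr_start_eq hT L hL hlong hc⟩
  exact ⟨hset, by simp [IsLeaf, ncDeg, hset]⟩


lemma graph_adj_T {V : Type*} [Fintype V] (H : HalinGraph V) {a b : V}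
    (h : H.T.Adj a b) : H.graph.Adj a b := Or.inl h

lemma graph_adj_C {V : Type*} [Fintype V] (H : HalinGraph V) {a b : V}
    (h : H.C.Adj a b) : H.graph.Adj a b := Or.inr h

lemma c4_of_path3 {V : Type*} [Fintype V] (H : HalinGraph V) (hfree : C4Free H.graph)
    {v1 a b c : V} (hv1a : v1 ≠ a) (hv1b : v1 ≠ b) (hv1c : v1 ≠ c) (hac : a ≠ c)
    (h1 : H.T.Adj v1 a) (h2 : H.C.Adj a b) (h3 : H.C.Adj b c)
    (h4 : H.T.Adj v1 c) : False := by
  have e1 : H.graph.Adj v1 a := graph_adj_T H h1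
  have e2 : H.graph.Adj a b := graph_adj_C H h2
  have e3 : H.graph.Adj b c := graph_adj_C H h3
  have e4 : H.graph.Adj c v1 := (graph_adj_T H h4).symm
  let w : H.graph.Walk v1 v1 := .cons e1 (.cons e2 (.cons e3 (.cons e4 .nil)))
  have hab : a ≠ b := h2.ne
  have hbc : b ≠ c := h3.ne
  have hcyc : w.IsCycle := by
    rw [Walk.isCycle_def]
    refine ⟨⟨?_⟩, by simp [w], ?_⟩
    · simp only [w, Walk.edges_cons, Walk.edges_nil, List.nodup_cons, List.mem_cons,
        List.mem_singleton, List.not_mem_nil, or_false, List.nodup_nil, and_true]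
      refine ⟨?_, ?_, ?_⟩ <;> simp [Sym2.eq, Sym2.rel_iff', Prod.ext_iff] <;> tauto
    · simp only [w, Walk.support_cons, Walk.support_nil, List.tail_cons]
      simp [List.nodup_cons, hab, hbc, hac, hv1a.symm, hv1b.symm, hv1c.symm]
  exact hfree v1 w hcyc rfl


lemma exists_three {α : Type*} {S : Set α} (hfin : S.Finite) (h3 : 3 ≤ S.ncard) :
    ∃ a b c : α, a ∈ S ∧ b ∈ S ∧ c ∈ S ∧ a ≠ b ∧ a ≠ c ∧ b ≠ c := by
  obtain ⟨a, ha⟩ := (Set.ncard_pos hfin).mp (by omega)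
  have h2 : 2 ≤ (S \ {a}).ncard := by
    have := Set.ncard_diff_singleton_add_one ha hfin
    omega
  obtain ⟨b, hb⟩ := (Set.ncard_pos (s := S \ {a}) hfin.diff).mp (by omega)
  have h1 : 1 ≤ ((S \ {a}) \ {b}).ncard := by
    have := Set.ncard_diff_singleton_add_one hb hfin.diff
    omega
  obtain ⟨c, hc⟩ := (Set.ncard_pos (s := (S \ {a}) \ {b}) (hfin.diff).diff).mp (by omega)
  refine ⟨a, b, c, ha, hb.1, hc.1.1, ?_, ?_, ?_⟩
  · rintro rfl; exact hb.2 rfl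
  · rintro rfl; exact hc.1.2 rfl
  · rintro rfl; exact hc.2 rfl

lemma exists_mid {V : Type*} [Fintype V] {G : SimpleGraph V} {S : Set V}
    (hconn : (G.induce S).Connected) (h3 : 3 ≤ S.ncard) :
    ∃ a b c : V, a ∈ S ∧ b ∈ S ∧ c ∈ S ∧ a ≠ c ∧ G.Adj a b ∧ G.Adj b c := by
  classical
  obtain ⟨a, b, c, ha, hb, hc, hab, hac, hbc⟩ := exists_three S.toFinite h3
  set A : ↥S := ⟨a, ha⟩
  set B : ↥S := ⟨b, hb⟩
  set C : ↥S := ⟨c, hc⟩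
  have key : ∀ (X Y : ↥S) (p : (G.induce S).Walk X Y), p.IsPath → 2 ≤ p.length →
      ∃ a b c : V, a ∈ S ∧ b ∈ S ∧ c ∈ S ∧ a ≠ c ∧ G.Adj a b ∧ G.Adj b c := by
    intro X Y p hp hlen
    refine ⟨(p.getVert 0 : ↥S), (p.getVert 1 : ↥S), (p.getVert 2 : ↥S),
      (p.getVert 0).2, (p.getVert 1).2, (p.getVert 2).2, ?_, ?_, ?_⟩
    · intro h
      have : p.getVert 0 = p.getVert 2 := Subtype.ext h
      have := path_getVert_inj hp (by omega) (by omega) this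
      omega
    · exact p.adj_getVert_succ (by omega)
    · exact p.adj_getVert_succ (by omega)
  obtain ⟨p⟩ := hconn.preconnected A B
  have hp := p.bypass_isPath
  by_cases h2 : 2 ≤ p.bypass.length
  · exact key A B p.bypass hp h2
  obtain ⟨q⟩ := hconn.preconnected B C
  have hq := q.bypass_isPath
  by_cases h2' : 2 ≤ q.bypass.length
  · exact key B C q.bypass hq h2'
  have h0 : p.bypass.length ≠ 0 := fun h =>
    hab (Subtype.ext_iff.mp (p.bypass.eq_of_length_eq_zero h))
  have h0' : q.bypass.length ≠ 0 := fun h =>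
    hbc (Subtype.ext_iff.mp (q.bypass.eq_of_length_eq_zero h))
  have hAB : p.bypass.length = 1 := by omega
  have hBC : q.bypass.length = 1 := by omega
  have eAB : (G.induce S).Adj A B := Walk.adj_of_length_eq_one hAB
  have eBC : (G.induce S).Adj B C := Walk.adj_of_length_eq_one hBC
  exact ⟨a, b, c, ha, hb, hc, hac, eAB, eBC⟩


lemma one_side {V : Type*} [Fintype V] [DecidableEq V] (H : HalinGraph V)
    (hfree : C4Free H.graph) {v0 vk : V} (L : H.T.Walk v0 vk) (hL : L.IsPath)
    (hlong : ∀ (a b : V) (p : H.T.Walk a b), p.IsPath → p.length ≤ L.length) :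
    {x : V | H.T.Adj (L.getVert 1) x ∧ IsLeaf H.T x}.ncard = 2 ∧
      IsLeaf H.T v0 ∧ H.T.Adj (L.getVert 1) v0 ∧
      (∀ x : V, H.T.Adj (L.getVert 1) x → ¬ IsLeaf H.T x → x = L.getVert 2) ∧
      ncDeg H.T (L.getVert 1) = 3 := by
  have hT := H.tree_isTree
  have hcard := H.four_le_card
  -- k ≥ 1
  have hk1 : 1 ≤ L.length := by
    by_contra h
    obtain ⟨w, hw⟩ := Fintype.exists_ne_of_one_lt_card (by omega : 1 < Fintype.card V) v0
    obtain ⟨p⟩ := hT.isConnected.preconnected v0 w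
    have hp := p.bypass_isPath
    have hlen := hlong _ _ p.bypass hp
    have h0 : p.bypass.length = 0 := by omega
    exact hw (p.bypass.eq_of_length_eq_zero h0).symm
  obtain ⟨hNS0, hleaf0⟩ := start_leaf hT L hL hlong hk1
  set v1 := L.getVert 1 with hv1def
  have hadj01 : H.T.Adj v0 v1 := by
    simpa using L.adj_getVert_succ (show 0 < L.length from hk1)
  -- k ≥ 2
  have hk2 : 2 ≤ L.length := by
    by_contra h
    have hl1 : L.length = 1 := by omega
    have hv1k : v1 = vk := by rw [hv1def, ← hl1]; exact L.getVert_length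
    have hW : ∃ w, w ≠ v0 ∧ w ≠ vk := by
      by_contra hcon
      push_neg at hcon
      have hsub : (Set.univ : Set V) ⊆ {v0, vk} := by
        intro w _
        by_cases hw : w = v0
        · simp [hw]
        · simp [hcon w hw]
      have h1 := Set.ncard_le_ncard hsub (Set.toFinite _)
      have h2 : ({v0, vk} : Set V).ncard ≤ 2 :=
        (Set.ncard_insert_le _ _).trans (by simp)
      rw [Set.ncard_univ, Nat.card_eq_fintype_card] at h1
      omega
    obtain ⟨w, hw0, hwk⟩ := hW
    obtain ⟨p⟩ := hT.isConnected.preconnected v0 w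
    have hq := p.bypass_isPath
    have h0 : p.bypass.length ≠ 0 := fun h => hw0 (p.bypass.eq_of_length_eq_zero h).symm
    have hle := hlong _ _ p.bypass hq
    have h1 : p.bypass.length = 1 := by omega
    have hadj : H.T.Adj v0 w := Walk.adj_of_length_eq_one h1
    exact hwk ((nbr_start_eq hT L hL hlong hadj).trans hv1k)
  set v2 := L.getVert 2 with hv2def
  have hadj12 : H.T.Adj v1 v2 := L.adj_getVert_succ (by omega)
  have hne02 : v0 ≠ v2 := by
    intro h
    have h' : L.getVert 0 = L.getVert 2 := by rwa [L.getVert_zero]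
    have := path_getVert_inj hL (by omega) (by omega) h'
    omega
  have hv1nl : ¬ IsLeaf H.T v1 := by
    intro hleaf
    have h1 := leaf_nbrSet hleaf hadj01.symm
    have h2 : v2 ∈ H.T.neighborSet v1 := hadj12
    rw [h1] at h2
    exact hne02 (Set.eq_of_mem_singleton h2).symm
  have hdeg1 := H.nonleaf_degree v1 hv1nl
  -- all non-leaf neighbours of v1 equal v2
  have hnotnil : ¬ L.Nil := Walk.not_nil_iff_lt_length.mpr (by omega)
  have hL1 : L.tail.IsPath := hL.tail
  have hL1len : L.tail.length + 1 = L.length := Walk.length_tail_add_one hnotnil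
  have hL1get : L.tail.getVert 1 = v2 := by
    rw [L.getVert_tail]
  have hstep2 : ∀ x, H.T.Adj v1 x → ¬ IsLeaf H.T x → x = v2 := by
    intro x hx hxl
    by_cases hmem : x ∈ L.tail.support
    · have := nbr_mem_support hT hL1 hx hmem
      rwa [hL1get] at this
    · exfalso
      have hM : (Walk.cons hx.symm L.tail).IsPath := hL1.cons hmem
      have hdegx := H.nonleaf_degree x hxl
      have hv1mem : v1 ∈ H.T.neighborSet x := hx.symm
      have hy : ((H.T.neighborSet x) \ {v1}).Nonempty := by
        rw [← Set.ncard_pos (Set.toFinite _)]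
        have := Set.ncard_diff_singleton_add_one hv1mem (Set.toFinite _)
        unfold ncDeg at hdegx
        omega
      obtain ⟨y, hyN, hyne⟩ := hy
      have hyx : H.T.Adj x y := hyN
      by_cases hymem : y ∈ (Walk.cons hx.symm L.tail).support
      · have := nbr_mem_support hT hM hyx hymem
        rw [Walk.getVert_cons_succ, Walk.getVert_zero] at this
        exact hyne (by simpa using this)
      · have hQ : (Walk.cons hyx.symm (Walk.cons hx.symm L.tail)).IsPath := hM.cons hymem
        have := hlong _ _ _ hQ
        simp only [Walk.length_cons] at this
        omega
  -- vk is a leaf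
  have hlongrev : ∀ (a b : V) (p : H.T.Walk a b), p.IsPath → p.length ≤ L.reverse.length := by
    intro a b p hp
    rw [Walk.length_reverse]
    exact hlong a b p hp
  obtain ⟨hNSk, hleafk⟩ := start_leaf hT L.reverse hL.reverse hlongrev
    (by rw [Walk.length_reverse]; omega)
  -- k ≥ 3
  have hk3 : 3 ≤ L.length := by
    by_contra h
    have hl2 : L.length = 2 := by omega
    have hv2k : v2 = vk := by rw [hv2def, ← hl2]; exact L.getVert_length
    have hAdjAll : ∀ x, x ≠ v0 → x ≠ v1 → H.T.Adj v1 x := by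
      intro x hx0 hx1
      obtain ⟨p⟩ := hT.isConnected.preconnected v0 x
      have hq := p.bypass_isPath
      have h0 : p.bypass.length ≠ 0 := fun hh => hx0 (p.bypass.eq_of_length_eq_zero hh).symm
      have hle := hlong _ _ p.bypass hq
      have hadj0 : H.T.Adj v0 (p.bypass.getVert 1) := by
        simpa using p.bypass.adj_getVert_succ (show 0 < p.bypass.length by omega)
      have hq1 : p.bypass.getVert 1 = v1 := nbr_start_eq hT L hL hlong hadj0
      have hlen2 : p.bypass.length = 2 := by
        rcases (by omega : p.bypass.length = 1 ∨ p.bypass.length = 2) with hh | hh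
        · exfalso
          have hgx : p.bypass.getVert 1 = x := by rw [← hh]; exact p.bypass.getVert_length
          exact hx1 (by rw [← hgx, hq1])
        · exact hh
      have hadj2 : H.T.Adj (p.bypass.getVert 1) (p.bypass.getVert 2) :=
        p.bypass.adj_getVert_succ (by omega)
      rw [hq1] at hadj2
      have hx2 : p.bypass.getVert 2 = x := by rw [← hlen2]; exact p.bypass.getVert_length
      rwa [hx2] at hadj2
    have hleafAll : ∀ x, x ≠ v1 → IsLeaf H.T x := by
      intro x hx1
      by_cases hx0 : x = v0
      · exact hx0 ▸ hleaf0
      by_contra hxl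
      have hx2 := hstep2 x (hAdjAll x hx0 hx1) hxl
      exact hxl (by rw [hx2, hv2k]; exact hleafk)
    have hv0C : v0 ∈ H.C.support := by
      rw [H.support_C]; exact hleaf0
    have hdC := H.two_regular v0 hv0C
    obtain ⟨a, b, hab, hNS⟩ := Set.ncard_eq_two.mp hdC
    have haadj : H.C.Adj v0 a := by
      have : a ∈ H.C.neighborSet v0 := by rw [hNS]; simp
      exact this
    have hbadj : H.C.Adj v0 b := by
      have : b ∈ H.C.neighborSet v0 := by rw [hNS]; simp
      exact this
    have haleaf : IsLeaf H.T a := by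
      have : a ∈ H.C.support := (SimpleGraph.mem_support H.C).mpr ⟨v0, haadj.symm⟩
      rwa [H.support_C] at this
    have hbleaf : IsLeaf H.T b := by
      have : b ∈ H.C.support := (SimpleGraph.mem_support H.C).mpr ⟨v0, hbadj.symm⟩
      rwa [H.support_C] at this
    have hv1a : v1 ≠ a := fun hh => hv1nl (hh ▸ haleaf)
    have hv1b : v1 ≠ b := fun hh => hv1nl (hh ▸ hbleaf)
    exact c4_of_path3 H hfree hv1a hadj01.ne' hv1b hab
      (hAdjAll a haadj.ne' hv1a.symm) haadj.symm hbadj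
      (hAdjAll b hbadj.ne' hv1b.symm)
  -- main case: k ≥ 3, v2 is not a leaf
  have hadj23 : H.T.Adj v2 (L.getVert 3) := L.adj_getVert_succ (by omega)
  have hne13 : v1 ≠ L.getVert 3 := by
    intro h
    have := path_getVert_inj hL (by omega) (by omega) h
    omega
  have hv2nl : ¬ IsLeaf H.T v2 := by
    intro hleaf
    have h1 := leaf_nbrSet hleaf hadj12.symm
    have h2 : L.getVert 3 ∈ H.T.neighborSet v2 := hadj23
    rw [h1] at h2
    exact hne13 (Set.eq_of_mem_singleton h2).symm
  -- identify the planar set with the set of leaf neighbours of v1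
  have hSeq : {x : V | IsLeaf H.T x ∧ (H.T.deleteEdges {s(v1, v2)}).Reachable v1 x}
      = {x : V | H.T.Adj v1 x ∧ IsLeaf H.T x} := by
    ext x
    simp only [Set.mem_setOf_eq]
    constructor
    · rintro ⟨hxl, hreach⟩
      obtain ⟨p⟩ := hreach
      have hq := p.bypass_isPath
      have hxne : x ≠ v1 := fun h => hv1nl (h ▸ hxl)
      have h0 : p.bypass.length ≠ 0 := fun h => hxne (p.bypass.eq_of_length_eq_zero h).symm
      have hadjw : (H.T.deleteEdges {s(v1, v2)}).Adj v1 (p.bypass.getVert 1) := by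
        simpa using p.bypass.adj_getVert_succ (show 0 < p.bypass.length by omega)
      rw [SimpleGraph.deleteEdges_adj] at hadjw
      have hwv2 : p.bypass.getVert 1 ≠ v2 := by
        intro h
        exact hadjw.2 (by rw [h]; exact Set.mem_singleton _)
      have hwleaf : IsLeaf H.T (p.bypass.getVert 1) := by
        by_contra hc
        exact hwv2 (hstep2 _ hadjw.1 hc)
      rcases eq_or_lt_of_le (show 1 ≤ p.bypass.length by omega) with h | h
      · have hgx : p.bypass.getVert 1 = x := by rw [h]; exact p.bypass.getVert_length
        exact ⟨hgx ▸ hadjw.1, hxl⟩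
      · exfalso
        have hadj2 : (H.T.deleteEdges {s(v1, v2)}).Adj (p.bypass.getVert 1) (p.bypass.getVert 2) :=
          p.bypass.adj_getVert_succ (by omega)
        have hTadj2 : H.T.Adj (p.bypass.getVert 1) (p.bypass.getVert 2) :=
          (SimpleGraph.deleteEdges_adj.mp hadj2).1
        have hNSw := leaf_nbrSet hwleaf hadjw.1.symm
        have hmem2 : p.bypass.getVert 2 ∈ H.T.neighborSet (p.bypass.getVert 1) := hTadj2
        rw [hNSw] at hmem2
        have h20 : p.bypass.getVert 2 = p.bypass.getVert 0 := by
          rw [p.bypass.getVert_zero]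
          simpa using hmem2
        have := path_getVert_inj hq (by omega) (by omega) h20
        omega
    · rintro ⟨hadj, hxl⟩
      refine ⟨hxl, ?_⟩
      have hxv2 : x ≠ v2 := fun h => hv2nl (h ▸ hxl)
      have hdel : (H.T.deleteEdges {s(v1, v2)}).Adj v1 x := by
        rw [SimpleGraph.deleteEdges_adj]
        refine ⟨hadj, ?_⟩
        rw [Set.mem_singleton_iff, Sym2.congr_right]
        exact hxv2
      exact hdel.reachable
  have hconn := H.planar v1 v2 hadj12
  rw [hSeq] at hconn
  -- upper bound: at most two leaf neighbours
  have hle2 : {x : V | H.T.Adj v1 x ∧ IsLeaf H.T x}.ncard ≤ 2 := by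
    by_contra h
    obtain ⟨a, b, c, ha, hb, hc, hac, hCab, hCbc⟩ := exists_mid hconn (by omega)
    exact c4_of_path3 H hfree (fun hh => hv1nl (by rw [hh]; exact ha.2))
      (fun hh => hv1nl (by rw [hh]; exact hb.2))
      (fun hh => hv1nl (by rw [hh]; exact hc.2)) hac ha.1 hCab hCbc hc.1
  -- lower bound
  have hvv : ((H.T.neighborSet v1) \ {v0, v2}).Nonempty := by
    rw [← Set.ncard_pos (Set.toFinite _)]
    have h1 := Set.ncard_le_ncard_diff_add_ncard (H.T.neighborSet v1) {v0, v2} (Set.toFinite _)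
    have h2 : ({v0, v2} : Set V).ncard ≤ 2 := (Set.ncard_insert_le _ _).trans (by simp)
    unfold ncDeg at hdeg1
    omega
  obtain ⟨u, huN, huD⟩ := hvv
  have huleaf : IsLeaf H.T u := by
    by_contra hc
    exact huD (by simp [hstep2 u huN hc])
  have hu0 : u ≠ v0 := fun h => huD (by simp [h])
  have hsub : ({v0, u} : Set V) ⊆ {x : V | H.T.Adj v1 x ∧ IsLeaf H.T x} := by
    intro z hz
    rcases hz with rfl | hz
    · exact ⟨hadj01.symm, hleaf0⟩
    · rw [Set.mem_singleton_iff] at hz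
      subst hz
      exact ⟨huN, huleaf⟩
  have hge2 : 2 ≤ {x : V | H.T.Adj v1 x ∧ IsLeaf H.T x}.ncard := by
    have h1 := Set.ncard_le_ncard hsub (Set.toFinite _)
    rwa [Set.ncard_pair hu0.symm] at h1
  have hS2 : {x : V | H.T.Adj v1 x ∧ IsLeaf H.T x}.ncard = 2 := le_antisymm hle2 hge2
  -- degree of v1
  have hNS1 : H.T.neighborSet v1 = insert v2 {x : V | H.T.Adj v1 x ∧ IsLeaf H.T x} := by
    ext z
    constructor
    · intro hz
      by_cases hzl : IsLeaf H.T z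
      · exact Set.mem_insert_of_mem _ ⟨hz, hzl⟩
      · rw [hstep2 z hz hzl]; exact Set.mem_insert _ _
    · intro hz
      rcases hz with rfl | hz
      · exact hadj12
      · exact hz.1
  have hdeg : ncDeg H.T v1 = 3 := by
    unfold ncDeg
    rw [hNS1, Set.ncard_insert_of_notMem (fun h => hv2nl h.2) (Set.toFinite _), hS2]
  exact ⟨hS2, hleaf0, hadj01.symm, hstep2, hdeg⟩

/-- In a `C₄`-free Halin graph, each semi-pendant vertex of a longest path `L` of the
characteristic tree is a branching vertex adjacent to exactly two leaves: `v₁` has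
exactly two leaf neighbours (one of which is `v₀`), its only non-leaf neighbour is
`v₂`, and `d_T(v₁) = 3`; symmetrically for `v_{k-1}`. -/
theorem semi_pendant_branching {V : Type*} [Fintype V] (H : HalinGraph V)
    (hfree : C4Free H.graph) {v0 vk : V} (L : H.T.Walk v0 vk) (hL : L.IsPath)
    (hlong : ∀ (a b : V) (p : H.T.Walk a b), p.IsPath → p.length ≤ L.length) :
    ({x : V | H.T.Adj (L.getVert 1) x ∧ IsLeaf H.T x}.ncard = 2 ∧
      IsLeaf H.T v0 ∧ H.T.Adj (L.getVert 1) v0 ∧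
      (∀ x : V, H.T.Adj (L.getVert 1) x → ¬ IsLeaf H.T x → x = L.getVert 2) ∧
      ncDeg H.T (L.getVert 1) = 3) ∧
    ({x : V | H.T.Adj (L.getVert (L.length - 1)) x ∧ IsLeaf H.T x}.ncard = 2 ∧
      IsLeaf H.T vk ∧ H.T.Adj (L.getVert (L.length - 1)) vk ∧
      (∀ x : V, H.T.Adj (L.getVert (L.length - 1)) x → ¬ IsLeaf H.T x →
        x = L.getVert (L.length - 2)) ∧
      ncDeg H.T (L.getVert (L.length - 1)) = 3) := by
  have : DecidableEq V := Classical.decEq V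
  have h1 := one_side H hfree L hL hlong
  have hlongrev : ∀ (a b : V) (p : H.T.Walk a b), p.IsPath → p.length ≤ L.reverse.length := by
    intro a b p hp
    rw [Walk.length_reverse]
    exact hlong a b p hp
  have h2 := one_side H hfree L.reverse hL.reverse hlongrev
  rw [Walk.getVert_reverse, Walk.getVert_reverse] at h2
  exact ⟨h1, h2⟩
end

section
/- Let H = T ∪ C be a Halin graph and let u1 and u2 be leaves of T with u1u2 ∈ E(C). Then every cycle 𝒞 in H containing the edge u1u2 has length at least d_T(u1, u2) + 1, i.e., at least the size of the bounded face of H incident to u1u2. -/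
open SimpleGraph

section AuxiliaryLemmas

variable {V : Type*}

/-- Any walk endpoint classification with respect to a deleted edge. -/
lemma two_class {G : SimpleGraph V} (u v : V) {x y : V} (w : G.Walk x y) :
    (G.deleteEdges {s(u,v)}).Reachable x y ∨
      (G.deleteEdges {s(u,v)}).Reachable x u ∨ (G.deleteEdges {s(u,v)}).Reachable x v := by
  induction w with
  | nil => exact Or.inl (Reachable.refl _)
  | @cons a b c h w ih =>
    by_cases he : s(a, b) = s(u, v)
    · rw [Sym2.eq_iff] at he
      rcases he with ⟨rfl, rfl⟩ | ⟨rfl, rfl⟩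
      · exact Or.inr (Or.inl (Reachable.refl _))
      · exact Or.inr (Or.inr (Reachable.refl _))
    · have hadj : (G.deleteEdges {s(u,v)}).Adj a b := by
        simp only [deleteEdges_adj, Set.mem_singleton_iff]
        exact ⟨h, he⟩
      rcases ih with h1 | h1 | h1
      · exact Or.inl (hadj.reachable.trans h1)
      · exact Or.inr (Or.inl (hadj.reachable.trans h1))
      · exact Or.inr (Or.inr (hadj.reachable.trans h1))

lemma reach_delete_of_reach {G : SimpleGraph V} {u v x y : V}
    (huv : (G.deleteEdges {s(u,v)}).Reachable u v) (h : G.Reachable x y) :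
    (G.deleteEdges {s(u,v)}).Reachable x y := by
  obtain ⟨w⟩ := h
  induction w with
  | nil => exact Reachable.refl _
  | @cons a b c h w ih =>
    refine Reachable.trans ?_ ih
    by_cases he : s(a, b) = s(u, v)
    · rw [Sym2.eq_iff] at he
      rcases he with ⟨rfl, rfl⟩ | ⟨rfl, rfl⟩
      · exact huv
      · exact huv.symm
    · exact Adj.reachable (by simp only [deleteEdges_adj, Set.mem_singleton_iff]; exact ⟨h, he⟩)

/-- In a connected graph on a finite vertex type, `|V| ≤ |E| + 1`. -/
lemma conn_card_le {W : Type*} [Fintype W] :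
    ∀ (n : ℕ) (G : SimpleGraph W) (_ : G.edgeSet.ncard = n) (_ : G.Connected),
      Fintype.card W ≤ n + 1 := by
  intro n
  induction n using Nat.strong_induction_on with
  | _ n ih =>
    intro G hn hG
    classical
    by_cases hac : G.IsAcyclic
    · have htree : G.IsTree := ⟨hG, hac⟩
      have : Nonempty W := hG.nonempty
      have h1 : 1 ≤ Fintype.card W := Fintype.card_pos
      have hcard := htree.card_edgeFinset
      have : G.edgeSet.ncard = G.edgeFinset.card := by
        rw [Set.ncard_eq_toFinset_card' G.edgeSet]
        congr
      omega
    · rw [SimpleGraph.isAcyclic_iff_forall_edge_isBridge] at hac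
      push_neg at hac
      obtain ⟨e, heE, hbr⟩ := hac
      induction e with
      | _ u v =>
      rw [SimpleGraph.isBridge_iff] at hbr
      have heE' : s(u,v) ∈ G.edgeSet := heE
      rw [SimpleGraph.mem_edgeSet] at heE
      push_neg at hbr
      have hreach : (G.deleteEdges {s(u,v)}).Reachable u v := by
        have := hbr
        exact this
      set G' := G.deleteEdges {s(u,v)} with hG'
      have hGedge : G'.edgeSet = G.edgeSet \ {s(u,v)} := by
        ext f
        induction f with
        | _ a b =>
          simp [SimpleGraph.mem_edgeSet, SimpleGraph.deleteEdges_adj, G']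
      have hcard' : G'.edgeSet.ncard = n - 1 := by
        rw [hGedge, Set.ncard_diff_singleton_of_mem heE', hn]
      have hconn' : G'.Connected := by
        have : Nonempty W := hG.nonempty
        rw [SimpleGraph.connected_iff]
        refine ⟨fun x y => reach_delete_of_reach hreach (hG x y), this⟩
      have hn1 : n - 1 < n := by
        have : 0 < n := by
          rw [← hn]
          exact (Set.ncard_pos (Set.toFinite _)).2 ⟨_, heE'⟩
        omega
      have := ih (n-1) hn1 G' hcard' hconn'
      omega

/-- In a graph where every vertex of `A` has exactly two neighbours and `A` induces a
connected subgraph, there cannot be three distinct edges leaving `A`. -/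
lemma cut_le_two [Fintype V] {C : SimpleGraph V} {A : Set V}
    (hconn : (C.induce A).Connected)
    (hreg : ∀ v ∈ A, (C.neighborSet v).ncard = 2)
    {a b p q r s : V} (hab : C.Adj a b) (hpq : C.Adj p q) (hrs : C.Adj r s)
    (ha : a ∈ A) (hb : b ∉ A) (hp : p ∈ A) (hq : q ∉ A) (hr : r ∈ A) (hs : s ∉ A)
    (h1 : s(a,b) ≠ s(p,q)) (h2 : s(a,b) ≠ s(r,s)) (h3 : s(p,q) ≠ s(r,s)) : False := by
  classical
  set out : V → Set V := fun v => {w | w ∉ A ∧ C.Adj v w} with hout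
  set inn : V → Set V := fun v => {w | w ∈ A ∧ C.Adj v w} with hinn
  have hsplit : ∀ v ∈ A, (inn v).ncard + (out v).ncard = 2 := by
    intro v hv
    rw [← hreg v hv, ← Set.ncard_union_eq ?disj (Set.toFinite _) (Set.toFinite _)]
    · congr 1
      ext w
      by_cases hwA : w ∈ A <;> simp [hinn, hout, SimpleGraph.mem_neighborSet, hwA]
    case disj =>
      rw [Set.disjoint_left]
      rintro w ⟨hw, -⟩ ⟨hw', -⟩
      exact hw' hw
  set GA := C.induce A with hGA
  haveI : DecidableRel GA.Adj := Classical.decRel _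
  have hdeg : ∀ v : ↥A, GA.degree v = (inn ↑v).ncard := by
    intro v
    have himg : Subtype.val '' (GA.neighborSet v) = inn ↑v := by
      ext w
      constructor
      · rintro ⟨w', hw', rfl⟩
        exact ⟨w'.2, hw'⟩
      · rintro ⟨hwA, hadj⟩
        exact ⟨⟨w, hwA⟩, hadj, rfl⟩
    rw [← himg, Set.ncard_image_of_injective _ Subtype.val_injective]
    rw [Set.ncard_eq_toFinset_card' (GA.neighborSet v), Set.toFinset_card,
      ← SimpleGraph.card_neighborSet_eq_degree]
  have hhs : ∑ v : ↥A, GA.degree v = 2 * GA.edgeFinset.card :=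
    SimpleGraph.sum_degrees_eq_twice_card_edges GA
  have hcc : Fintype.card ↥A ≤ GA.edgeSet.ncard + 1 := conn_card_le _ GA rfl hconn
  have hE : GA.edgeSet.ncard = GA.edgeFinset.card := by
    rw [Set.ncard_eq_toFinset_card' GA.edgeSet]
    congr
  have hsum2 : (∑ v : ↥A, (inn ↑v).ncard) + (∑ v : ↥A, (out ↑v).ncard)
      = 2 * Fintype.card ↥A := by
    rw [← Finset.sum_add_distrib]
    have h2 : ∀ v : ↥A, (inn ↑v).ncard + (out ↑v).ncard = 2 := fun v => hsplit ↑v v.2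
    calc ∑ v : ↥A, ((inn ↑v).ncard + (out ↑v).ncard) = ∑ _v : ↥A, 2 :=
          Finset.sum_congr rfl fun v _ => h2 v
      _ = 2 * Fintype.card ↥A := by
          rw [Finset.sum_const, smul_eq_mul, Finset.card_univ, mul_comm]
  have hsum1 : ∑ v : ↥A, GA.degree v = ∑ v : ↥A, (inn ↑v).ncard :=
    Finset.sum_congr rfl fun v _ => hdeg v
  -- Lower bound: at least three edges leave A
  have hbq : b ≠ q ∨ a ≠ p := by
    by_contra hcon
    push_neg at hcon
    exact h1 (by rw [hcon.1, hcon.2])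
  have hbs : b ≠ s ∨ a ≠ r := by
    by_contra hcon
    push_neg at hcon
    exact h2 (by rw [hcon.1, hcon.2])
  have hqs : q ≠ s ∨ p ≠ r := by
    by_contra hcon
    push_neg at hcon
    exact h3 (by rw [hcon.1, hcon.2])
  have hmemb : b ∈ out a := ⟨hb, hab⟩
  have hmemq : q ∈ out p := ⟨hq, hpq⟩
  have hmems : s ∈ out r := ⟨hs, hrs⟩
  have key : 3 ≤ ∑ v : ↥A, (out ↑v).ncard := by
    have single : ∀ (v : V) (hv : v ∈ A), (out v).ncard ≤ ∑ v : ↥A, (out ↑v).ncard := by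
      intro v hv
      exact Finset.single_le_sum (f := fun z : ↥A => (out ↑z).ncard)
        (fun i _ => Nat.zero_le _) (Finset.mem_univ ⟨v, hv⟩)
    have pair2 : ∀ (v w : V) (hv : v ∈ A) (hw : w ∈ A), v ≠ w →
        (out v).ncard + (out w).ncard ≤ ∑ v : ↥A, (out ↑v).ncard := by
      intro v w hv hw hvw
      have hne : (⟨v, hv⟩ : ↥A) ≠ ⟨w, hw⟩ := by simp [Subtype.ext_iff, hvw]
      calc (out v).ncard + (out w).ncard
          = ∑ z ∈ ({⟨v, hv⟩, ⟨w, hw⟩} : Finset ↥A), (out ↑z).ncard := by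
            rw [Finset.sum_pair hne]
        _ ≤ _ := Finset.sum_le_sum_of_subset (Finset.subset_univ _)
    by_cases hap : a = p
    · by_cases har : a = r
      · -- all three equal
        subst hap; subst har
        have hbq' : b ≠ q := hbq.resolve_right (by simp)
        have hbs' : b ≠ s := hbs.resolve_right (by simp)
        have hqs' : q ≠ s := hqs.resolve_right (by simp)
        have hsub : ({b, q, s} : Set V) ⊆ out a := by
          rintro w (rfl | rfl | rfl) <;> assumption
        have h3card : ({b, q, s} : Set V).ncard = 3 := by
          rw [Set.ncard_insert_of_notMem (by simp [hbq', hbs']),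
            Set.ncard_insert_of_notMem (by simp [hqs']), Set.ncard_singleton]
        have := Set.ncard_le_ncard hsub (Set.toFinite _)
        calc 3 = ({b, q, s} : Set V).ncard := h3card.symm
          _ ≤ (out a).ncard := this
          _ ≤ _ := single a ha
      · -- a = p ≠ r
        subst hap
        have hbq' : b ≠ q := hbq.resolve_right (by simp)
        have h2a : 2 ≤ (out a).ncard := by
          have hsub : ({b, q} : Set V) ⊆ out a := by
            rintro w (rfl | rfl) <;> assumption
          have : ({b, q} : Set V).ncard = 2 := Set.ncard_pair hbq'
          rw [← this]
          exact Set.ncard_le_ncard hsub (Set.toFinite _)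
        have h1r : 1 ≤ (out r).ncard := (Set.ncard_pos (Set.toFinite _)).2 ⟨s, hmems⟩
        have := pair2 a r ha hr har
        omega
    · by_cases har : a = r
      · subst har
        have hbs' : b ≠ s := hbs.resolve_right (by simp)
        have h2a : 2 ≤ (out a).ncard := by
          have hsub : ({b, s} : Set V) ⊆ out a := by
            rintro w (rfl | rfl) <;> assumption
          have : ({b, s} : Set V).ncard = 2 := Set.ncard_pair hbs'
          rw [← this]
          exact Set.ncard_le_ncard hsub (Set.toFinite _)
        have h1p : 1 ≤ (out p).ncard := (Set.ncard_pos (Set.toFinite _)).2 ⟨q, hmemq⟩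
        have := pair2 a p ha hp hap
        omega
      · by_cases hpr : p = r
        · subst hpr
          have hqs' : q ≠ s := hqs.resolve_right (by simp)
          have h2p : 2 ≤ (out p).ncard := by
            have hsub : ({q, s} : Set V) ⊆ out p := by
              rintro w (rfl | rfl) <;> assumption
            have : ({q, s} : Set V).ncard = 2 := Set.ncard_pair hqs'
            rw [← this]
            exact Set.ncard_le_ncard hsub (Set.toFinite _)
          have h1a : 1 ≤ (out a).ncard := (Set.ncard_pos (Set.toFinite _)).2 ⟨b, hmemb⟩
          have := pair2 p a hp ha (Ne.symm hap)
          omega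
        · -- all distinct
          have h1a : 1 ≤ (out a).ncard := (Set.ncard_pos (Set.toFinite _)).2 ⟨b, hmemb⟩
          have h1p : 1 ≤ (out p).ncard := (Set.ncard_pos (Set.toFinite _)).2 ⟨q, hmemq⟩
          have h1r : 1 ≤ (out r).ncard := (Set.ncard_pos (Set.toFinite _)).2 ⟨s, hmems⟩
          have hsum3 : ∑ z ∈ ({⟨a, ha⟩, ⟨p, hp⟩, ⟨r, hr⟩} : Finset ↥A), (out ↑z).ncard
              = (out a).ncard + ((out p).ncard + (out r).ncard) := by
            rw [Finset.sum_insert (by simp [Subtype.ext_iff, hap, har]),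
              Finset.sum_pair (by simp [Subtype.ext_iff, hpr])]
          calc 3 ≤ (out a).ncard + ((out p).ncard + (out r).ncard) := by omega
            _ = ∑ z ∈ ({⟨a, ha⟩, ⟨p, hp⟩, ⟨r, hr⟩} : Finset ↥A), (out ↑z).ncard := hsum3.symm
            _ ≤ ∑ v : ↥A, (out ↑v).ncard := Finset.sum_le_sum_of_subset (Finset.subset_univ _)
  omega

/-- In a tree, a vertex cannot have two distinct neighbours both at distance
`≤ dist u1 v` from a fixed vertex `u1`. -/
lemma parent_unique {T : SimpleGraph V} (hT : T.IsTree) {u1 v w1 w2 : V}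
    (h1 : T.Adj v w1) (h2 : T.Adj v w2) (hne : w1 ≠ w2)
    (d1 : T.dist u1 w1 ≤ T.dist u1 v) (d2 : T.dist u1 w2 ≤ T.dist u1 v) : False := by
  classical
  have hconn := hT.isConnected
  have key : ∀ (w : V), T.Adj v w → T.dist u1 w ≤ T.dist u1 v →
      ∃ (p : T.Walk u1 w), p.IsPath ∧ v ∉ p.support := by
    intro w hw hd
    obtain ⟨p, hp, hplen⟩ := hconn.exists_path_of_dist u1 w
    refine ⟨p, hp, fun hv => ?_⟩
    have hsplit := p.take_spec hv
    have hlen : (p.takeUntil v hv).length + (p.dropUntil v hv).length = p.length := by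
      rw [← SimpleGraph.Walk.length_append, hsplit]
    have htake : T.dist u1 v ≤ (p.takeUntil v hv).length := SimpleGraph.dist_le _
    have hdrop : 1 ≤ (p.dropUntil v hv).length := by
      by_contra hcon
      push_neg at hcon
      have : (p.dropUntil v hv).length = 0 := by omega
      exact hw.ne (SimpleGraph.Walk.eq_of_length_eq_zero this)
    omega
  obtain ⟨p1, hp1, hv1⟩ := key w1 h1 d1
  obtain ⟨p2, hp2, hv2⟩ := key w2 h2 d2
  have hq1 : (p1.concat h1.symm).IsPath := by
    rw [SimpleGraph.Walk.isPath_def, SimpleGraph.Walk.support_concat,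
      List.nodup_append]
    exact ⟨hp1.support_nodup, List.nodup_singleton _, fun a ha b hb hab => hv1 (by rw [List.mem_singleton] at hb; rw [← hb, ← hab]; exact ha)⟩
  have hq2 : (p2.concat h2.symm).IsPath := by
    rw [SimpleGraph.Walk.isPath_def, SimpleGraph.Walk.support_concat,
      List.nodup_append]
    exact ⟨hp2.support_nodup, List.nodup_singleton _, fun a ha b hb hab => hv2 (by rw [List.mem_singleton] at hb; rw [← hb, ← hab]; exact ha)⟩
  obtain ⟨p0, -, huniq⟩ := hT.existsUnique_path u1 v
  have heq : p1.concat h1.symm = p2.concat h2.symm := by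
    rw [huniq _ hq1, huniq _ hq2]
  obtain ⟨hv, -⟩ := SimpleGraph.Walk.concat_inj heq
  exact hne hv

/-- Splitting a duplicate-free walk at an edge incident to its start. -/
lemma split_at_start_edge {G : SimpleGraph V} {u1 u2 z : V} (hne : u1 ≠ u2)
    (q : G.Walk u1 z) (hnd : q.support.Nodup) (he : s(u1, u2) ∈ q.edges) :
    ∃ r : G.Walk u2 z, r.length + 1 = q.length ∧ s(u1, u2) ∉ r.edges := by
  cases q with
  | nil => simp at he
  | @cons _ y _ h q' =>
    rw [SimpleGraph.Walk.support_cons, List.nodup_cons] at hnd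
    rw [SimpleGraph.Walk.edges_cons, List.mem_cons] at he
    rcases he with he | he
    · have hy : y = u2 := by
        rw [Sym2.eq_iff] at he
        rcases he with ⟨-, h'⟩ | ⟨-, h'⟩
        · exact h'.symm
        · exact absurd h'.symm hne
      subst hy
      refine ⟨q', by simp, fun hcon => ?_⟩
      exact hnd.1 (SimpleGraph.Walk.fst_mem_support_of_mem_edges q' hcon)
    · exact absurd (SimpleGraph.Walk.fst_mem_support_of_mem_edges q' he) hnd.1

/-- From a cycle through the edge `u1u2`, extract a walk from `u2` to `u1` avoiding that
edge, one shorter than the cycle. -/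
lemma cycle_split {G : SimpleGraph V} {u1 u2 : V} (hne : u1 ≠ u2)
    (c : G.Walk u1 u1) (hc : c.IsCycle) (he : s(u1, u2) ∈ c.edges) :
    ∃ P : G.Walk u2 u1, P.length + 1 = c.length ∧ s(u1, u2) ∉ P.edges := by
  cases c with
  | nil => simp at he
  | @cons _ z _ h q =>
    have hnd : q.support.Nodup := by
      have := hc.support_nodup
      rwa [SimpleGraph.Walk.support_cons, List.tail_cons] at this
    have hednd := hc.isCircuit.isTrail.edges_nodup
    rw [SimpleGraph.Walk.edges_cons] at hednd
    rw [SimpleGraph.Walk.edges_cons, List.mem_cons] at he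
    by_cases hz : z = u2
    · subst hz
      refine ⟨q, by simp, ?_⟩
      exact (List.nodup_cons.mp hednd).1
    · have he' : s(u1, u2) ∈ q.reverse.edges := by
        rw [SimpleGraph.Walk.edges_reverse, List.mem_reverse]
        rcases he with he | he
        · exfalso
          rw [Sym2.eq_iff] at he
          rcases he with ⟨-, h'⟩ | ⟨-, h'⟩
          · exact hz h'.symm
          · exact hne h'.symm
        · exact he
      have hnd' : q.reverse.support.Nodup := by
        rw [SimpleGraph.Walk.support_reverse, List.nodup_reverse]
        exact hnd
      obtain ⟨r, hr1, hr2⟩ := split_at_start_edge hne q.reverse hnd' he'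
      refine ⟨r.append (SimpleGraph.Walk.cons h SimpleGraph.Walk.nil).reverse, ?_, ?_⟩
      · rw [SimpleGraph.Walk.length_append, SimpleGraph.Walk.length_reverse]
        rw [SimpleGraph.Walk.length_reverse] at hr1
        simp only [SimpleGraph.Walk.length_cons, SimpleGraph.Walk.length_nil]
        omega
      · rw [SimpleGraph.Walk.edges_append, List.mem_append]
        rintro (hcon | hcon)
        · exact hr2 hcon
        · rw [SimpleGraph.Walk.edges_reverse, List.mem_reverse] at hcon
          simp only [SimpleGraph.Walk.edges_cons, SimpleGraph.Walk.edges_nil,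
            List.mem_singleton] at hcon
          rw [Sym2.eq_iff] at hcon
          rcases hcon with ⟨-, h'⟩ | ⟨h', -⟩
          · exact hz h'.symm
          · exact G.loopless.irrefl u1 (h' ▸ h)

end AuxiliaryLemmas

/-- If `u₁` and `u₂` are leaves of the characteristic tree joined by an outer-cycle
edge, then every cycle of the Halin graph through `u₁u₂` has length at least
`d_T(u₁, u₂) + 1`, the size of the bounded face incident to `u₁u₂`. -/
theorem cycle_through_outer_edge_long {V : Type*} [Fintype V] (H : HalinGraph V)
    {u1 u2 : V} (h1 : IsLeaf H.T u1) (h2 : IsLeaf H.T u2) (hadj : H.C.Adj u1 u2)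
    (x : V) (c : H.graph.Walk x x) (hc : c.IsCycle) (he : s(u1, u2) ∈ c.edges) :
    H.T.dist u1 u2 + 1 ≤ c.length := by
  classical
  have hconn := H.tree_isTree.isConnected
  have hne : u1 ≠ u2 := hadj.ne
  have hsupport : ∀ z : V, z ∈ H.C.support ↔ IsLeaf H.T z := by
    intro z
    rw [H.support_C]
    exact Iff.rfl
  set k := H.T.dist u1 u2 with hk
  have hk1 : 1 ≤ k := hconn.pos_dist_of_ne hne
  obtain ⟨Q, hQlen⟩ := hconn.exists_walk_length_eq_dist u1 u2
  set t : ℕ → V := fun i => Q.getVert i with ht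
  have ht0 : t 0 = u1 := Q.getVert_zero
  have htk : t k = u2 := by
    rw [ht]
    simp only []
    rw [show k = Q.length by rw [hQlen]]
    exact Q.getVert_length
  have htadj : ∀ i, i < k → H.T.Adj (t i) (t (i + 1)) := by
    intro i hi
    exact Q.adj_getVert_succ (by omega)
  -- distances along the geodesic
  have hdist1 : ∀ i, i ≤ k → H.T.dist u1 (t i) ≤ i := by
    intro i
    induction i with
    | zero => intro _; rw [ht0]; simp
    | succ n ihn =>
      intro hle
      have h1 := ihn (by omega)
      have hadj' := htadj n (by omega)
      have h2 : H.T.dist (t n) (t (n + 1)) = 1 := SimpleGraph.dist_eq_one_iff_adj.2 hadj'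
      have h3 := hconn.dist_triangle (u := u1) (v := t n) (w := t (n + 1))
      omega
  have hdist2 : ∀ j, j ≤ k → H.T.dist (t (k - j)) u2 ≤ j := by
    intro j
    induction j with
    | zero => intro _; rw [Nat.sub_zero, htk]; simp
    | succ n ihn =>
      intro hle
      have h1 := ihn (by omega)
      have hadj' : H.T.Adj (t (k - (n + 1))) (t (k - n)) := by
        have h' := htadj (k - (n + 1)) (by omega)
        rwa [show k - (n + 1) + 1 = k - n by omega] at h'
      have h2 : H.T.dist (t (k - (n + 1))) (t (k - n)) = 1 :=
        SimpleGraph.dist_eq_one_iff_adj.2 hadj'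
      have h3 := hconn.dist_triangle (u := t (k - (n + 1))) (v := t (k - n)) (w := u2)
      omega
  have hdist : ∀ i, i ≤ k → H.T.dist u1 (t i) = i := by
    intro i hi
    have hA := hdist1 i hi
    have hB := hdist2 (k - i) (by omega)
    rw [show k - (k - i) = i by omega] at hB
    have hC : k ≤ H.T.dist u1 (t i) + H.T.dist (t i) u2 := by
      have := hconn.dist_triangle (u := u1) (v := t i) (w := u2)
      omega
    omega
  have tinj : ∀ i j, i ≤ k → j ≤ k → t i = t j → i = j := by
    intro i j hi hj hij
    have hA := hdist i hi
    have hB := hdist j hj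
    rw [hij] at hA
    omega
  set S : ℕ → Set V := fun i => {v | (H.T.deleteEdges {s(t i, t (i + 1))}).Reachable u1 v}
    with hSdef
  have edist : ∀ i j, i < k → j < k → s(t i, t (i + 1)) = s(t j, t (j + 1)) → i = j := by
    intro i j hi hj hee
    rw [Sym2.eq_iff] at hee
    rcases hee with ⟨hA, hB⟩ | ⟨hA, hB⟩
    · exact tinj i j (by omega) (by omega) hA
    · have e1 := tinj i (j + 1) (by omega) (by omega) hA
      have e2 := tinj (i + 1) j (by omega) (by omega) hB
      omega
  have hu1S : ∀ i, u1 ∈ S i := fun i => Reachable.refl _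
  have hmem_le : ∀ i, i < k → ∀ m, m ≤ i → t m ∈ S i := by
    intro i hi m
    induction m with
    | zero => intro _; rw [ht0]; exact hu1S i
    | succ n ihn =>
      intro hm
      have hn := ihn (by omega)
      refine hn.trans (SimpleGraph.Adj.reachable ?_)
      rw [SimpleGraph.deleteEdges_adj]
      refine ⟨htadj n (by omega), ?_⟩
      rw [Set.mem_singleton_iff]
      intro hcon
      have := edist n i (by omega) hi hcon
      omega
  have hbridge : ∀ i, i < k →
      ¬ (H.T.deleteEdges {s(t i, t (i + 1))}).Reachable (t i) (t (i + 1)) := by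
    intro i hi
    have hisb := (isAcyclic_iff_forall_adj_isBridge.mp H.tree_isTree.IsAcyclic) (htadj i hi)
    rw [SimpleGraph.isBridge_iff] at hisb
    exact hisb
  have hmem_gt : ∀ i, i < k → ∀ m, i + 1 ≤ m → m ≤ k → t m ∉ S i := by
    intro i hi m h1' h2' hmem
    have chain : ∀ n, i + 1 ≤ n → n ≤ m →
        (H.T.deleteEdges {s(t i, t (i + 1))}).Reachable (t (i + 1)) (t n) := by
      intro n
      induction n with
      | zero => intro hcon; omega
      | succ n' ihn =>
        intro hn1 hn2
        by_cases hcase : i + 1 = n' + 1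
        · rw [← hcase]
        · have hprev := ihn (by omega) (by omega)
          refine hprev.trans (SimpleGraph.Adj.reachable ?_)
          rw [SimpleGraph.deleteEdges_adj]
          refine ⟨htadj n' (by omega), ?_⟩
          rw [Set.mem_singleton_iff]
          intro hcon
          have := edist n' i (by omega) hi hcon
          omega
    have hch := chain m h1' le_rfl
    have hti : t i ∈ S i := hmem_le i hi i le_rfl
    exact hbridge i hi (hti.symm.trans (hmem.trans hch.symm))
  have hu2S : ∀ i, i < k → u2 ∉ S i := by
    intro i hi
    have := hmem_gt i hi k (by omega) le_rfl
    rwa [htk] at this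
  have hcross : ∀ i, i < k → ∀ v w, v ∈ S i → w ∉ S i → H.T.Adj v w →
      v = t i ∧ w = t (i + 1) := by
    intro i hi v w hv hw hvw
    have hee : s(v, w) = s(t i, t (i + 1)) := by
      by_contra hcon
      apply hw
      refine hv.trans (SimpleGraph.Adj.reachable ?_)
      rw [SimpleGraph.deleteEdges_adj]
      exact ⟨hvw, by rwa [Set.mem_singleton_iff]⟩
    rw [Sym2.eq_iff] at hee
    rcases hee with ⟨hA, hB⟩ | ⟨hA, hB⟩
    · exact ⟨hA, hB⟩
    · exfalso
      apply hmem_gt i hi (i + 1) le_rfl (by omega)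
      rw [← hA]
      exact hv
  have hnested : ∀ i j, i < j → j < k → S i ⊆ S j := by
    intro i j hij hj v hv
    obtain ⟨W⟩ := hv
    have hsupp : ∀ y ∈ W.support, y ∈ S i := fun y hy => ⟨W.takeUntil y hy⟩
    have hedge : s(t j, t (j + 1)) ∉ W.edges := by
      intro hcon
      exact hmem_gt i (by omega) j (by omega) (by omega)
        (hsupp _ (Walk.fst_mem_support_of_mem_edges W hcon))
    have hsub : ∀ e ∈ W.edges, e ∈ (H.T.deleteEdges {s(t j, t (j + 1))}).edgeSet := by
      intro e heW
      have hTe : e ∈ (H.T.deleteEdges {s(t i, t (i + 1))}).edgeSet := W.edges_subset_edgeSet heW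
      induction e with
      | _ a b =>
        rw [SimpleGraph.mem_edgeSet, SimpleGraph.deleteEdges_adj] at hTe ⊢
        refine ⟨hTe.1, ?_⟩
        rw [Set.mem_singleton_iff]
        intro hcon
        rw [← hcon] at hedge
        exact hedge heW
    exact ⟨W.transfer _ hsub⟩
  have hleafdiff : ∀ i j, i < j → j < k → ∃ ℓ, IsLeaf H.T ℓ ∧ ℓ ∈ S j ∧ ℓ ∉ S i := by
    intro i j hij hj
    set Y := S j \ S i with hY
    have htjY : t j ∈ Y := ⟨hmem_le j hj j le_rfl, hmem_gt i (by omega) j (by omega) (by omega)⟩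
    obtain ⟨v, hvY, hmax⟩ :=
      Set.exists_max_image Y (fun z => H.T.dist u1 z) (Set.toFinite _) ⟨t j, htjY⟩
    by_contra hno
    push_neg at hno
    have hvleaf : ¬ IsLeaf H.T v := fun hl => hvY.2 (hno v hl hvY.1)
    have hdeg := H.nonleaf_degree v hvleaf
    rw [ncDeg, Set.ncard_eq_toFinset_card'] at hdeg
    obtain ⟨s3, hs3sub, hs3card⟩ := Finset.exists_subset_card_eq hdeg
    rw [Finset.card_eq_three] at hs3card
    obtain ⟨w1, w2, w3, h12, h13, h23, rfl⟩ := hs3card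
    have hw1 : H.T.Adj v w1 := by
      have := hs3sub (by simp : w1 ∈ ({w1, w2, w3} : Finset V))
      rwa [Set.mem_toFinset, SimpleGraph.mem_neighborSet] at this
    have hw2 : H.T.Adj v w2 := by
      have := hs3sub (by simp : w2 ∈ ({w1, w2, w3} : Finset V))
      rwa [Set.mem_toFinset, SimpleGraph.mem_neighborSet] at this
    have hw3 : H.T.Adj v w3 := by
      have := hs3sub (by simp : w3 ∈ ({w1, w2, w3} : Finset V))
      rwa [Set.mem_toFinset, SimpleGraph.mem_neighborSet] at this
    -- find two distinct "far" neighbours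
    have hfar : ∃ wa wb, wa ≠ wb ∧ H.T.Adj v wa ∧ H.T.Adj v wb ∧
        H.T.dist u1 v < H.T.dist u1 wa ∧ H.T.dist u1 v < H.T.dist u1 wb := by
      by_cases f1 : H.T.dist u1 v < H.T.dist u1 w1
      · by_cases f2 : H.T.dist u1 v < H.T.dist u1 w2
        · exact ⟨w1, w2, h12, hw1, hw2, f1, f2⟩
        · by_cases f3 : H.T.dist u1 v < H.T.dist u1 w3
          · exact ⟨w1, w3, h13, hw1, hw3, f1, f3⟩
          · exact absurd (parent_unique (u1 := u1) H.tree_isTree hw2 hw3 h23 (by omega) (by omega)) not_false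
      · by_cases f2 : H.T.dist u1 v < H.T.dist u1 w2
        · by_cases f3 : H.T.dist u1 v < H.T.dist u1 w3
          · exact ⟨w2, w3, h23, hw2, hw3, f2, f3⟩
          · exact absurd (parent_unique (u1 := u1) H.tree_isTree hw1 hw3 h13 (by omega) (by omega)) not_false
        · exact absurd (parent_unique (u1 := u1) H.tree_isTree hw1 hw2 h12 (by omega) (by omega)) not_false
    obtain ⟨wa, wb, hab, hva, hvb, hfa, hfb⟩ := hfar
    -- a far neighbour different from t (j+1) stays in Y
    have hstep : ∀ w, H.T.Adj v w → H.T.dist u1 v < H.T.dist u1 w → w ≠ t (j + 1) → w ∈ Y := by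
      intro w hvw hfw hwne
      have hwSj : w ∈ S j := by
        by_contra hcon
        obtain ⟨-, hB⟩ := hcross j hj v w hvY.1 hcon hvw
        exact hwne hB
      have hwSi : w ∉ S i := by
        intro hcon
        obtain ⟨hA, hB⟩ := hcross i (by omega) w v hcon hvY.2 hvw.symm
        have d1 : H.T.dist u1 w = i := by rw [hA]; exact hdist i (by omega)
        have d2 : H.T.dist u1 v = i + 1 := by rw [hB]; exact hdist (i + 1) (by omega)
        omega
      exact ⟨hwSj, hwSi⟩
    have hcontr : ∀ w, w ∈ Y → H.T.dist u1 v < H.T.dist u1 w → False := by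
      intro w hw hfw
      have := hmax w hw
      omega
    by_cases hwa : wa = t (j + 1)
    · have hwb : wb ≠ t (j + 1) := fun hcon => hab (by rw [hwa, hcon])
      exact hcontr wb (hstep wb hvb hfb hwb) hfb
    · exact hcontr wa (hstep wa hva hfa hwa) hfa
  -- the leaf-side sets
  set L : ℕ → Set V := fun i => {z | IsLeaf H.T z ∧ z ∈ S i} with hLdef
  have hLconn : ∀ i, i < k → (H.C.induce (L i)).Connected := by
    intro i hi
    have hp := H.planar (t i) (t (i + 1)) (htadj i hi)
    have hsets :
        {z : V | IsLeaf H.T z ∧ (H.T.deleteEdges {s(t i, t (i + 1))}).Reachable (t i) z}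
          = L i := by
      ext z
      constructor
      · rintro ⟨hl, hr⟩
        exact ⟨hl, (hmem_le i hi i le_rfl).trans hr⟩
      · rintro ⟨hl, hz⟩
        exact ⟨hl, (hmem_le i hi i le_rfl).symm.trans hz⟩
    rwa [hsets] at hp
  have hregL : ∀ i, i < k → ∀ z ∈ L i, (H.C.neighborSet z).ncard = 2 := by
    intro i hi z hz
    exact H.two_regular z ((hsupport z).2 hz.1)
  -- decompose the cycle
  have hu1mem : u1 ∈ c.support := Walk.fst_mem_support_of_mem_edges c he
  set c1 := c.rotate u1 hu1mem with hc1def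
  have hc1 : c1.IsCycle := hc.rotate hu1mem
  have he1 : s(u1, u2) ∈ c1.edges := ((c.rotate_edges u1 hu1mem).mem_iff).2 he
  have hlen1 : c1.length = c.length := by
    rw [← Walk.length_edges, ← Walk.length_edges]
    exact (c.rotate_edges u1 hu1mem).perm.length_eq
  obtain ⟨P, hPlen, hPe⟩ := cycle_split hne c1 hc1 he1
  -- boundary darts
  have hcrossP : ∀ i : Fin k, ∃ xy : V × V, s(xy.1, xy.2) ∈ P.edges ∧
      H.graph.Adj xy.1 xy.2 ∧ xy.1 ∈ S ↑i ∧ xy.2 ∉ S ↑i := by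
    intro i
    obtain ⟨d, hd, hd1, hd2⟩ := P.exists_boundary_dart {v | v ∉ S ↑i}
      (hu2S ↑i i.isLt) (by simp only [Set.mem_setOf_eq, not_not]; exact hu1S ↑i)
    rw [Set.mem_setOf_eq] at hd1
    rw [Set.mem_setOf_eq, not_not] at hd2
    refine ⟨(d.snd, d.fst), ?_, d.adj.symm, hd2, hd1⟩
    have : s(d.snd, d.fst) = d.edge := Sym2.eq_swap
    rw [this]
    exact List.mem_map_of_mem (f := Dart.edge) hd
  choose xy hxyE hxyA hxyS1 hxyS2 using hcrossP
  -- core distinctness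
  have core : ∀ i j : Fin k, (i : ℕ) < (j : ℕ) →
      s((xy i).1, (xy i).2) = s((xy j).1, (xy j).2) → False := by
    intro i j hij heq
    have hik : (i : ℕ) < k := i.isLt
    have hjk : (j : ℕ) < k := j.isLt
    rw [Sym2.eq_iff] at heq
    rcases heq with ⟨hA, hB⟩ | ⟨hA, hB⟩
    swap
    · -- (xy i).1 = (xy j).2 : impossible by nestedness
      apply hxyS2 j
      rw [← hA]
      exact hnested ↑i ↑j hij hjk (hxyS1 i)
    -- now xy j = xy i as pairs
    set a := (xy i).1 with hadef
    set b := (xy i).2 with hbdef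
    have haSj : a ∈ S ↑j := by have hx := hxyS1 j; rwa [← hA] at hx
    have hbSj : b ∉ S ↑j := by have hx := hxyS2 j; rwa [← hB] at hx
    have haSi : a ∈ S ↑i := hxyS1 i
    have hbSi : b ∉ S ↑i := hxyS2 i
    have hGadj := hxyA i
    rw [HalinGraph.graph, SimpleGraph.sup_adj] at hGadj
    rcases hGadj with hTadj | hCadj
    · obtain ⟨-, hBi⟩ := hcross ↑i hik a b haSi hbSi hTadj
      obtain ⟨-, hBj⟩ := hcross ↑j hjk a b haSj hbSj hTadj
      have : (i : ℕ) + 1 = (j : ℕ) + 1 := tinj _ _ (by omega) (by omega) (by rw [← hBi, ← hBj])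
      omega
    · -- outer-cycle edge
      have haleaf : IsLeaf H.T a := (hsupport a).1 ((SimpleGraph.mem_support H.C).2 ⟨b, hCadj⟩)
      have hbleaf : IsLeaf H.T b := (hsupport b).1
        ((SimpleGraph.mem_support H.C).2 ⟨a, hCadj.symm⟩)
      obtain ⟨ℓ, hℓleaf, hℓj, hℓi⟩ := hleafdiff ↑i ↑j hij hjk
      have hℓsup : ℓ ∈ H.C.support := (hsupport ℓ).2 hℓleaf
      have hu1sup : u1 ∈ H.C.support := (SimpleGraph.mem_support H.C).2 ⟨u2, hadj⟩
      obtain ⟨W⟩ := H.cycle_connected.preconnected ⟨ℓ, hℓsup⟩ ⟨u1, hu1sup⟩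
      obtain ⟨d, -, hd1, hd2⟩ := W.exists_boundary_dart
        {z : ↥(H.C.support) | IsLeaf H.T ↑z ∧ (z : V) ∈ S ↑j ∧ (z : V) ∉ S ↑i}
        ⟨hℓleaf, hℓj, hℓi⟩
        (by
          rw [Set.mem_setOf_eq]
          rintro ⟨-, -, hcon⟩
          exact hcon (hu1S ↑i))
      rw [Set.mem_setOf_eq] at hd1 hd2
      set p : V := ↑d.fst with hpdef
      set q : V := ↑d.snd with hqdef
      have hpq : H.C.Adj p q := d.adj
      have hqleaf : IsLeaf H.T q := (hsupport q).1 d.snd.2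
      have hpM : IsLeaf H.T p ∧ p ∈ S ↑j ∧ p ∉ S ↑i := hd1
      have hd1' : s(u1, u2) ≠ s(a, b) := fun hcon => hPe (hcon ▸ hxyE i)
      have hqcases : q ∉ S ↑j ∨ q ∈ S ↑i := by
        by_contra hcon
        push_neg at hcon
        exact hd2 ⟨hqleaf, hcon.1, hcon.2⟩
      rcases hqcases with hqout | hqin
      · -- q outside S j : three distinct cut edges of L j
        refine cut_le_two (hLconn ↑j hjk) (hregL ↑j hjk) hadj hCadj hpq
          ⟨h1, hu1S ↑j⟩ (fun hcon => hu2S ↑j hjk hcon.2)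
          ⟨haleaf, haSj⟩ (fun hcon => hbSj hcon.2)
          ⟨hpM.1, hpM.2.1⟩ (fun hcon => hqout hcon.2)
          hd1' ?_ ?_
        · intro hcon
          rw [Sym2.eq_iff] at hcon
          rcases hcon with ⟨hA', hB'⟩ | ⟨hA', hB'⟩
          · apply hpM.2.2; rw [← hA']; exact hu1S ↑i
          · apply hu2S ↑j hjk; rw [hB']; exact hpM.2.1
        · intro hcon
          rw [Sym2.eq_iff] at hcon
          rcases hcon with ⟨hA', hB'⟩ | ⟨hA', hB'⟩
          · apply hpM.2.2; rw [← hA']; exact hxyS1 i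
          · apply hbSj; rw [hbdef, hB']; exact hpM.2.1
      · -- q inside S i : three distinct cut edges of L i
        refine cut_le_two (hLconn ↑i hik) (hregL ↑i hik) hadj hCadj hpq.symm
          ⟨h1, hu1S ↑i⟩ (fun hcon => hu2S ↑i hik hcon.2)
          ⟨haleaf, haSi⟩ (fun hcon => hbSi hcon.2)
          ⟨hqleaf, hqin⟩ (fun hcon => hpM.2.2 hcon.2)
          hd1' ?_ ?_
        · intro hcon
          rw [Sym2.eq_iff] at hcon
          rcases hcon with ⟨hA', hB'⟩ | ⟨hA', hB'⟩
          · apply hu2S ↑j hjk; rw [hB']; exact hpM.2.1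
          · apply hpM.2.2; rw [← hA']; exact hu1S ↑i
        · intro hcon
          rw [Sym2.eq_iff] at hcon
          rcases hcon with ⟨hA', hB'⟩ | ⟨hA', hB'⟩
          · apply hbSj; rw [hbdef, hB']; exact hpM.2.1
          · apply hpM.2.2; rw [← hA']; exact hxyS1 i
  -- conclude via an injection into the edges of P
  have hfinj : Set.InjOn (fun i : Fin k => s((xy i).1, (xy i).2)) ↑(Finset.univ : Finset (Fin k)) := by
    intro i _ j _ hij
    by_contra hne'
    rcases lt_or_gt_of_ne hne' with hlt | hgt
    · exact core i j hlt hij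
    · exact core j i hgt hij.symm
  have hcount : k ≤ P.edges.toFinset.card := by
    have hmaps : ∀ i ∈ (Finset.univ : Finset (Fin k)),
        s((xy i).1, (xy i).2) ∈ P.edges.toFinset := by
      intro i _
      rw [List.mem_toFinset]
      exact hxyE i
    have := Finset.card_le_card_of_injOn _ hmaps hfinj
    simpa using this
  have hfin : P.edges.toFinset.card ≤ P.length := by
    rw [← Walk.length_edges]
    exact P.edges.toFinset_card_le
  omega
end

section
/- Let H = T ∪ C be a Halin graph and let e = uv ∈ E(T) be a tree edge such that both u and v are non-leaf vertices of T. Then every cycle 𝒞 in H containing e has length at least min(|F1|, |F2|), where F1 and F2 are the two bounded faces of H incident to e; explicitly, if w1w2 and w1′w2′ are the two outer-cycle edges of C for which e lies on the unique path in T between their endpoints, then the length of 𝒞 is at least min(d_T(w1, w2), d_T(w1′, w2′)) + 1. -/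
open SimpleGraph

namespace HalinAux

open SimpleGraph Walk

variable {V : Type*}

section Walks
variable {G : SimpleGraph V}

lemma dart_fst_ne_end {x y : V} {W : G.Walk x y} (h : W.support.Nodup)
    {d : G.Dart} (hd : d ∈ W.darts) : d.fst ≠ y := by
  intro hdy
  have h1 : d.fst ∈ W.darts.map (·.fst) := List.mem_map_of_mem hd
  have h2 : W.darts.map (·.fst) ++ [y] = W.support := Walk.map_fst_darts_append W
  rw [← h2] at h
  exact List.disjoint_of_nodup_append h (hdy ▸ h1) (List.mem_singleton_self y)

lemma end_unique {q z x₁ x₂ : V} {W : G.Walk q z} (hW : W.IsPath)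
    (h1 : s(z, x₁) ∈ W.edges) (h2 : s(z, x₂) ∈ W.edges) : x₁ = x₂ := by
  have get : ∀ x : V, s(z, x) ∈ W.edges → ∃ d ∈ W.darts, d.fst = x ∧ d.snd = z := by
    intro x hx
    have hx' : s(z, x) ∈ W.darts.map Dart.edge := hx
    obtain ⟨d, hd, hde⟩ := List.mem_map.mp hx'
    rw [dart_edge_eq_mk'_iff] at hde
    rcases hde with hde | hde
    · exact absurd (congrArg Prod.fst hde) (dart_fst_ne_end hW.support_nodup hd)
    · exact ⟨d, hd, congrArg Prod.fst hde, congrArg Prod.snd hde⟩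
  obtain ⟨d1, hd1, hf1, hs1⟩ := get x₁ h1
  obtain ⟨d2, hd2, hf2, hs2⟩ := get x₂ h2
  have hnd : (W.darts.map (fun d => d.snd)).Nodup := by
    rw [Walk.map_snd_darts]
    exact hW.support_nodup.sublist (List.tail_sublist _)
  have : d1 = d2 := List.inj_on_of_nodup_map hnd hd1 hd2 (by rw [hs1, hs2])
  rw [← hf1, ← hf2, this]

lemma split_at_edge {a b : V} : ∀ {x y : V} (W : G.Walk x y), W.IsTrail →
    s(a,b) ∈ W.edges →
    ∃ (a' b' : V) (W1 : G.Walk x a') (W2 : G.Walk b' y),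
      ((a' = a ∧ b' = b) ∨ (a' = b ∧ b' = a)) ∧
      W.length = W1.length + 1 + W2.length ∧
      (∀ f ∈ W1.edges, f ∈ W.edges ∧ f ≠ s(a,b)) ∧
      (∀ f ∈ W2.edges, f ∈ W.edges ∧ f ≠ s(a,b)) := by
  intro x y W
  induction W with
  | nil => intro _ hab; simp at hab
  | @cons xx m yy h t ih =>
    intro hW hab
    by_cases hf : s(xx, m) = s(a, b)
    · refine ⟨xx, m, Walk.nil, t, ?_, ?_, ?_, ?_⟩
      · rcases Sym2.eq_iff.mp hf with ⟨h1, h2⟩ | ⟨h1, h2⟩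
        · exact Or.inl ⟨h1, h2⟩
        · exact Or.inr ⟨h1, h2⟩
      · simp only [Walk.length_cons, Walk.length_nil]; omega
      · simp
      · intro f hfe
        refine ⟨by simp [Walk.edges_cons, hfe], fun hcontra => ?_⟩
        have hh : s(xx, m) ∉ t.edges := by
          have := hW.edges_nodup
          rw [Walk.edges_cons] at this
          exact (List.nodup_cons.mp this).1
        rw [← hcontra] at hf
        exact hh (hf ▸ hfe)
    · have hab' : s(a, b) ∈ t.edges := by
        rw [Walk.edges_cons] at hab
        rcases List.mem_cons.mp hab with h' | h'
        · exact absurd h'.symm hf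
        · exact h'
      obtain ⟨a', b', W1, W2, hor, hlen, he1, he2⟩ := ih hW.of_cons hab'
      refine ⟨a', b', Walk.cons h W1, W2, hor, ?_, ?_, ?_⟩
      · simp [Walk.length_cons, hlen]; omega
      · intro f hfe
        rw [Walk.edges_cons] at hfe
        rcases List.mem_cons.mp hfe with h' | h'
        · subst h'; exact ⟨by simp [Walk.edges_cons], hf⟩
        · obtain ⟨hm, hne⟩ := he1 f h'
          exact ⟨by simp [Walk.edges_cons, hm], hne⟩
      · intro f hfe
        obtain ⟨hm, hne⟩ := he2 f hfe
        exact ⟨by simp [Walk.edges_cons, hm], hne⟩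

end Walks

section Dels
variable {T : SimpleGraph V}

lemma reach_del_of_walk {e₀ : Sym2 V} {x y : V} (p : T.Walk x y)
    (hp : e₀ ∉ p.edges) : (T.deleteEdges {e₀}).Reachable x y := by
  classical
  refine ⟨p.transfer _ ?_⟩
  intro e he
  rw [edgeSet_deleteEdges]
  exact ⟨p.edges_subset_edgeSet he, fun hh => hp ((Set.mem_singleton_iff.mp hh) ▸ he)⟩

lemma reach_del_iff {e₀ : Sym2 V} {x y : V} :
    (T.deleteEdges {e₀}).Reachable x y ↔ ∃ p : T.Walk x y, p.IsPath ∧ e₀ ∉ p.edges := by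
  classical
  constructor
  · rintro ⟨w⟩
    refine ⟨(w.bypass).transfer T ?_, ?_, ?_⟩
    · intro e he
      have := (w.bypass).edges_subset_edgeSet he
      rw [edgeSet_deleteEdges] at this
      exact this.1
    · exact (w.bypass_isPath).transfer _
    · rw [Walk.edges_transfer]
      intro hmem
      have := (w.bypass).edges_subset_edgeSet hmem
      rw [edgeSet_deleteEdges] at this
      exact this.2 rfl
  · rintro ⟨p, _, hpe⟩; exact reach_del_of_walk p hpe

end Dels

section Tree
variable {T : SimpleGraph V}

lemma path_unique (hT : T.IsTree) {x y : V} {p q : T.Walk x y}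
    (hp : p.IsPath) (hq : q.IsPath) : p = q :=
  ((hT.existsUnique_path x y).unique hp hq)

lemma path_length_eq_dist (hT : T.IsTree) {x y : V} {p : T.Walk x y} (hp : p.IsPath) :
    p.length = T.dist x y := by
  classical
  obtain ⟨w, hw⟩ := (hT.isConnected).exists_walk_length_eq_dist x y
  have heq : p = w.bypass := path_unique hT hp w.bypass_isPath
  have h1 : p.length ≤ w.length := heq ▸ w.length_bypass_le
  have h2 := T.dist_le p
  omega

lemma not_reach_del (hT : T.IsTree) {p q : V} (hpq : T.Adj p q) :
    ¬ (T.deleteEdges {s(p,q)}).Reachable p q := by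
  have h := (isAcyclic_iff_forall_adj_isBridge.mp hT.2) hpq
  rw [isBridge_iff] at h
  exact h

lemma side_not_both (hT : T.IsTree) {p q x : V} (hpq : T.Adj p q)
    (h1 : (T.deleteEdges {s(p,q)}).Reachable p x)
    (h2 : (T.deleteEdges {s(p,q)}).Reachable q x) : False :=
  not_reach_del hT hpq (h1.trans h2.symm)

lemma side_or (hT : T.IsTree) {p q : V} (hpq : T.Adj p q) (x : V) :
    (T.deleteEdges {s(p,q)}).Reachable p x ∨ (T.deleteEdges {s(p,q)}).Reachable q x := by
  obtain ⟨w⟩ := hT.isConnected p x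
  have aux : ∀ {s x : V} (_ : T.Walk s x),
      ((T.deleteEdges {s(p,q)}).Reachable p s ∨ (T.deleteEdges {s(p,q)}).Reachable q s) →
      ((T.deleteEdges {s(p,q)}).Reachable p x ∨ (T.deleteEdges {s(p,q)}).Reachable q x) := by
    intro s x w
    induction w with
    | nil => exact id
    | @cons aa bb cc h t ih =>
      intro hs
      apply ih
      by_cases hedge : s(aa, bb) = s(p, q)
      · rcases Sym2.eq_iff.mp hedge with ⟨rfl, rfl⟩ | ⟨rfl, rfl⟩
        · exact Or.inr (Reachable.refl _)
        · exact Or.inl (Reachable.refl _)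
      · have hadj : (T.deleteEdges {s(p,q)}).Adj aa bb := by
          rw [deleteEdges_adj]
          exact ⟨h, by simpa using hedge⟩
        rcases hs with hs | hs
        · exact Or.inl (hs.trans hadj.reachable)
        · exact Or.inr (hs.trans hadj.reachable)
  exact aux w (Or.inl (Reachable.refl _))

lemma dist_split (hT : T.IsTree) {p q x z : V} (hpq : T.Adj p q)
    (hx : (T.deleteEdges {s(p,q)}).Reachable p x)
    (hz : (T.deleteEdges {s(p,q)}).Reachable q z) :
    T.dist x z = T.dist x p + 1 + T.dist q z := by
  classical
  obtain ⟨P1, hP1, hP1e⟩ := reach_del_iff.mp hx.symm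
  obtain ⟨P2, hP2, hP2e⟩ := reach_del_iff.mp hz
  have hWpath : (P1.append (Walk.cons hpq P2)).IsPath := by
    apply Walk.IsPath.mk'
    rw [Walk.support_append, Walk.support_cons, List.tail_cons, List.nodup_append]
    refine ⟨hP1.support_nodup, hP2.support_nodup, ?_⟩
    intro w hw1 b hw2 hwb
    subst hwb
    have hw1' : (T.deleteEdges {s(p,q)}).Reachable p w :=
      (reach_del_of_walk (P1.dropUntil w hw1)
        (fun hmem => hP1e (P1.edges_dropUntil_subset hw1 hmem))).symm
    have hw2' : (T.deleteEdges {s(p,q)}).Reachable q w :=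
      reach_del_of_walk (P2.takeUntil w hw2)
        (fun hmem => hP2e (P2.edges_takeUntil_subset hw2 hmem))
    exact side_not_both hT hpq hw1' hw2'
  have hlen := path_length_eq_dist hT hWpath
  rw [Walk.length_append, Walk.length_cons] at hlen
  rw [← hlen, path_length_eq_dist hT hP1, path_length_eq_dist hT hP2]
  omega

end Tree

section Seq
variable {T : SimpleGraph V}

/-- step towards `a`. -/
noncomputable def fstep (T : SimpleGraph V) (a y : V) : V :=
  letI : Nonempty V := ⟨y⟩
  Classical.epsilon (fun z => T.Adj y z ∧ T.dist z a + 1 = T.dist y a)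

/-- the vertex sequence along the tree path from `u` to `a`. -/
noncomputable def fseq (T : SimpleGraph V) (a u : V) : ℕ → V
  | 0 => u
  | n+1 => fstep T a (fseq T a u n)

lemma fstep_spec (hT : T.IsTree) {a y : V} (hd : 0 < T.dist y a) :
    T.Adj y (fstep T a y) ∧ T.dist (fstep T a y) a + 1 = T.dist y a := by
  have hr : T.Reachable y a := hT.isConnected y a
  have hex : ∃ z, T.Adj y z ∧ T.dist z a + 1 = T.dist y a := by
    obtain ⟨w, hw⟩ := hr.exists_walk_length_eq_dist
    cases w with
    | nil => rw [← hw] at hd; simp at hd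
    | @cons _ m _ h t =>
      refine ⟨m, h, ?_⟩
      rw [Walk.length_cons] at hw
      have h1 : T.dist m a ≤ t.length := T.dist_le t
      have h2 : T.dist y a ≤ T.dist y m + T.dist m a := hT.isConnected.dist_triangle
      have h3 : T.dist y m ≤ 1 := by
        have := T.dist_le (Walk.cons h Walk.nil)
        simpa using this
      omega
  exact Classical.epsilon_spec hex

lemma fseq_dist (hT : T.IsTree) {a u : V} :
    ∀ t, t ≤ T.dist u a → T.dist u (fseq T a u t) = t ∧
      T.dist (fseq T a u t) a = T.dist u a - t := by
  intro t
  induction t with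
  | zero => intro _; simp [fseq]
  | succ n ih =>
    intro hn
    obtain ⟨h1, h2⟩ := ih (by omega)
    have hd : 0 < T.dist (fseq T a u n) a := by omega
    obtain ⟨hadj, hdist⟩ := fstep_spec hT hd
    have hstep : fseq T a u (n+1) = fstep T a (fseq T a u n) := rfl
    rw [hstep]
    constructor
    · have hub : T.dist u (fstep T a (fseq T a u n)) ≤ n + 1 := by
        have htri : T.dist u (fstep T a (fseq T a u n)) ≤
            T.dist u (fseq T a u n) + T.dist (fseq T a u n) (fstep T a (fseq T a u n)) :=
          hT.isConnected.dist_triangle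
        have h3 : T.dist (fseq T a u n) (fstep T a (fseq T a u n)) ≤ 1 := by
          have := T.dist_le (Walk.cons hadj Walk.nil)
          simpa using this
        omega
      have hlb : T.dist u a ≤ T.dist u (fstep T a (fseq T a u n)) +
          T.dist (fstep T a (fseq T a u n)) a := hT.isConnected.dist_triangle
      omega
    · omega

lemma fseq_adj (hT : T.IsTree) {a u : V} {t : ℕ} (ht : t < T.dist u a) :
    T.Adj (fseq T a u t) (fseq T a u (t+1)) := by
  obtain ⟨h1, h2⟩ := fseq_dist (a := a) (u := u) hT t (by omega)
  have hd : 0 < T.dist (fseq T a u t) a := by omega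
  exact (fstep_spec hT hd).1

lemma fseq_zero {a u : V} : fseq T a u 0 = u := rfl

lemma fseq_last (hT : T.IsTree) {a u : V} : fseq T a u (T.dist u a) = a := by
  obtain ⟨h1, h2⟩ := fseq_dist hT (T.dist u a) le_rfl
  simp only [Nat.sub_self] at h2
  have := hT.isConnected (fseq T a u (T.dist u a)) a
  rcases (dist_eq_zero_iff_eq_or_not_reachable.mp h2) with h | h
  · exact h
  · exact absurd this h

lemma fseq_inj (hT : T.IsTree) {a u : V} {i j : ℕ} (hi : i ≤ T.dist u a)
    (hj : j ≤ T.dist u a) (hij : i ≠ j) : fseq T a u i ≠ fseq T a u j := by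
  intro h
  have h1 := (fseq_dist hT i hi).1
  have h2 := (fseq_dist hT j hj).1
  rw [h] at h1
  omega

lemma chain_exists (hT : T.IsTree) {a u : V} :
    ∀ (d t : ℕ), t + d ≤ T.dist u a →
    ∃ w : T.Walk (fseq T a u t) (fseq T a u (t+d)), w.IsPath ∧ w.length = d ∧
      (∀ e' ∈ w.edges, ∃ j, t ≤ j ∧ j < t + d ∧ e' = s(fseq T a u j, fseq T a u (j+1))) ∧
      (∀ j, t ≤ j → j < t + d → s(fseq T a u j, fseq T a u (j+1)) ∈ w.edges) ∧
      (∀ x ∈ w.support, ∃ j, t ≤ j ∧ j ≤ t + d ∧ x = fseq T a u j) := by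
  intro d
  induction d with
  | zero =>
    intro t _
    refine ⟨Walk.nil, by simp, by simp, by simp, by intro j h1 h2; omega, ?_⟩
    intro x hx
    rw [Walk.support_nil, List.mem_singleton] at hx
    exact ⟨t, le_rfl, by omega, hx⟩
  | succ n ih =>
    intro t hle
    obtain ⟨w, hw, hwl, hwe1, hwe2, hws⟩ := ih t (by omega)
    have hadj : T.Adj (fseq T a u (t+n)) (fseq T a u (t+n+1)) := fseq_adj hT (by omega)
    have hnotmem : fseq T a u (t+n+1) ∉ w.support := by
      intro hmem
      obtain ⟨j, hj1, hj2, hj3⟩ := hws _ hmem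
      exact fseq_inj hT (by omega) (by omega) (by omega) hj3.symm
    refine ⟨(w.concat hadj).copy rfl (by rw [show t + (n+1) = t + n + 1 from rfl]), ?_, ?_, ?_, ?_, ?_⟩
    · rw [Walk.isPath_def, Walk.support_copy, Walk.support_concat]
      rw [List.nodup_append]
      refine ⟨hw.support_nodup, List.nodup_singleton _, ?_⟩
      intro o ho1 b ho2 hob
      subst hob
      rw [List.mem_singleton] at ho2
      exact hnotmem (ho2 ▸ ho1)
    · rw [Walk.length_copy, Walk.length_concat]; omega
    · intro e' he'
      rw [Walk.edges_copy, Walk.edges_concat, List.concat_eq_append, List.mem_append] at he'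
      rcases he' with he' | he'
      · obtain ⟨j, hj1, hj2, hj3⟩ := hwe1 e' he'
        exact ⟨j, hj1, by omega, hj3⟩
      · rw [List.mem_singleton] at he'
        exact ⟨t + n, by omega, by omega, he'⟩
    · intro j hj1 hj2
      rw [Walk.edges_copy, Walk.edges_concat, List.concat_eq_append, List.mem_append]
      by_cases hj : j = t + n
      · right; rw [List.mem_singleton, hj]
      · left; exact hwe2 j hj1 (by omega)
    · intro x hx
      rw [Walk.support_copy, Walk.support_concat, List.mem_append] at hx
      rcases hx with hx | hx
      · obtain ⟨j, hj1, hj2, hj3⟩ := hws x hx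
        exact ⟨j, hj1, by omega, hj3⟩
      · rw [List.mem_singleton] at hx
        exact ⟨t + n + 1, by omega, by omega, hx⟩

end Seq

section Reach
variable {T : SimpleGraph V}

lemma chain_reach (hT : T.IsTree) {a u : V} {i t s' : ℕ} (hts : t ≤ s')
    (hsk : s' ≤ T.dist u a) (hi : i < t ∨ (s' ≤ i ∧ i < T.dist u a)) :
    (T.deleteEdges {s(fseq T a u i, fseq T a u (i+1))}).Reachable
      (fseq T a u t) (fseq T a u s') := by
  obtain ⟨w, hw, hwl, hwe1, _, _⟩ := chain_exists (a := a) (u := u) hT (s' - t) t (by omega)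
  have hcast : t + (s' - t) = s' := by omega
  refine reach_del_of_walk (w.copy rfl (by rw [hcast])) ?_
  rw [Walk.edges_copy]
  intro hmem
  obtain ⟨j, hj1, hj2, hj3⟩ := hwe1 _ hmem
  have hj2' : j < s' := by omega
  rcases Sym2.eq_iff.mp hj3 with ⟨hA, hB⟩ | ⟨hA, hB⟩
  · have : i = j := by
      by_contra hne
      exact fseq_inj hT (by omega) (by omega) hne hA
    omega
  · have h1 : i = j + 1 := by
      by_contra hne
      exact fseq_inj hT (by omega) (by omega) hne hA
    have h2 : i + 1 = j := by
      by_contra hne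
      exact fseq_inj hT (by omega) (by omega) hne hB
    omega

lemma nest (hT : T.IsTree) {a u : V} {i j : ℕ} (hij : i ≤ j) (hjk : j + 1 ≤ T.dist u a)
    {x : V}
    (hx : (T.deleteEdges {s(fseq T a u j, fseq T a u (j+1))}).Reachable (fseq T a u (j+1)) x) :
    (T.deleteEdges {s(fseq T a u i, fseq T a u (i+1))}).Reachable (fseq T a u (i+1)) x := by
  classical
  obtain ⟨r, hr, hre⟩ := reach_del_iff.mp hx
  have hkey : s(fseq T a u i, fseq T a u (i+1)) ∉ r.edges := by
    intro hmem
    have hsup : fseq T a u i ∈ r.support := r.fst_mem_support_of_mem_edges hmem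
    have hr1 : (r.takeUntil _ hsup).IsPath := hr.takeUntil hsup
    have hr1e : s(fseq T a u j, fseq T a u (j+1)) ∉ (r.takeUntil _ hsup).edges :=
      fun hm => hre (r.edges_takeUntil_subset hsup hm)
    obtain ⟨w, hwp, _, _, hwc, _⟩ := chain_exists (a := a) (u := u) hT (j + 1 - i) i (by omega)
    have hcast : i + (j + 1 - i) = j + 1 := by omega
    have hw2 : (w.copy rfl (by rw [hcast])).IsPath := by
      rw [Walk.isPath_copy]; exact hwp
    have hequ : (r.takeUntil _ hsup).reverse = w.copy rfl (by rw [hcast]) :=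
      path_unique hT hr1.reverse hw2
    have hmem2 : s(fseq T a u j, fseq T a u (j+1)) ∈ (r.takeUntil _ hsup).reverse.edges := by
      rw [hequ, Walk.edges_copy]
      exact hwc j (by omega) (by omega)
    rw [Walk.edges_reverse, List.mem_reverse] at hmem2
    exact hr1e hmem2
  have h2 : (T.deleteEdges {s(fseq T a u i, fseq T a u (i+1))}).Reachable (fseq T a u (j+1)) x :=
    reach_del_of_walk r hkey
  exact (chain_reach hT (show i+1 ≤ j+1 by omega) hjk (Or.inl (by omega))).trans h2

lemma f1_ne (hT : T.IsTree) {u v a : V} (huv : T.Adj u v)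
    (ha : (T.deleteEdges {s(u,v)}).Reachable u a) (hk : 1 ≤ T.dist u a) :
    fseq T a u 1 ≠ v := by
  intro heq
  have h1 := (fseq_dist (a := a) (u := u) hT 1 hk).2
  rw [heq] at h1
  have h2 : T.dist a v = T.dist a u + 1 + T.dist v v := dist_split hT huv ha (Reachable.refl v)
  have e1 : T.dist a v = T.dist v a := dist_comm
  have e2 : T.dist a u = T.dist u a := dist_comm
  have e3 : T.dist v v = 0 := dist_self
  omega

lemma ssub (hT : T.IsTree) {u v a : V} (huv : T.Adj u v)
    (ha : (T.deleteEdges {s(u,v)}).Reachable u a) {t : ℕ} (ht : t < T.dist u a) {x : V}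
    (hx : (T.deleteEdges {s(fseq T a u t, fseq T a u (t+1))}).Reachable (fseq T a u (t+1)) x) :
    (T.deleteEdges {s(u,v)}).Reachable u x := by
  classical
  obtain ⟨r, hr, hre⟩ := reach_del_iff.mp hx
  have husup : u ∉ r.support := by
    intro hmem
    have hr1 : (r.takeUntil _ hmem).IsPath := hr.takeUntil hmem
    have hr1e : s(fseq T a u t, fseq T a u (t+1)) ∉ (r.takeUntil _ hmem).edges :=
      fun hm => hre (r.edges_takeUntil_subset hmem hm)
    obtain ⟨w, hwp, _, _, hwc, _⟩ := chain_exists (a := a) (u := u) hT (t+1) 0 (by omega)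
    have hw2 : (w.copy fseq_zero (by rw [Nat.zero_add])).IsPath := by
      rw [Walk.isPath_copy]; exact hwp
    have hequ : (r.takeUntil _ hmem).reverse = w.copy fseq_zero (by rw [Nat.zero_add]) :=
      path_unique hT hr1.reverse hw2
    have hmem2 : s(fseq T a u t, fseq T a u (t+1)) ∈ (r.takeUntil _ hmem).reverse.edges := by
      rw [hequ, Walk.edges_copy]
      exact hwc t (by omega) (by omega)
    rw [Walk.edges_reverse, List.mem_reverse] at hmem2
    exact hr1e hmem2
  have hee : s(u, v) ∉ r.edges := fun hm => husup (r.fst_mem_support_of_mem_edges hm)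
  obtain ⟨w0, hw0p, _, hw0e1, _, _⟩ := chain_exists (a := a) (u := u) hT (t+1) 0 (by omega)
  have h0 : (T.deleteEdges {s(u,v)}).Reachable u (fseq T a u (t+1)) := by
    refine reach_del_of_walk (w0.copy fseq_zero (by rw [Nat.zero_add])) ?_
    rw [Walk.edges_copy]
    intro hmem
    obtain ⟨j, hj1, hj2, hj3⟩ := hw0e1 _ hmem
    rw [Nat.zero_add] at hj2
    rcases Sym2.eq_iff.mp hj3 with ⟨hA, hB⟩ | ⟨hA, hB⟩
    · have hj0 : j = 0 := by
        by_contra hne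
        exact fseq_inj hT (show 0 ≤ T.dist u a by omega) (by omega)
          (fun h => hne h.symm) (fseq_zero.trans hA)
      subst hj0
      exact f1_ne hT huv ha (by omega) hB.symm
    · exact fseq_inj hT (show 0 ≤ T.dist u a by omega) (by omega)
        (by omega) (fseq_zero.trans hA)
  exact h0.trans (reach_del_of_walk r hee)

lemma psi_exists (hT : T.IsTree) {u a : V} (x : V) :
    ∃ s, s ≤ T.dist u a ∧
      ((T.dist u x : ℤ) + T.dist u a - T.dist x a = 2 * s) ∧
      (∀ i, i < s → (T.deleteEdges {s(fseq T a u i, fseq T a u (i+1))}).Reachable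
        (fseq T a u (i+1)) x) ∧
      (s < T.dist u a → ¬ (T.deleteEdges {s(fseq T a u s, fseq T a u (s+1))}).Reachable
        (fseq T a u (s+1)) x) := by
  classical
  set k := T.dist u a with hk
  set P : ℕ → Prop := fun m => ∀ i, i < m →
    (T.deleteEdges {s(fseq T a u i, fseq T a u (i+1))}).Reachable (fseq T a u (i+1)) x with hP
  have hP0 : P 0 := by intro i hi; omega
  set s := Nat.findGreatest P k with hs
  have hsk : s ≤ k := Nat.findGreatest_le k
  have hspec : P s := Nat.findGreatest_spec (Nat.zero_le k) hP0
  have hnot : s < k → ¬ (T.deleteEdges {s(fseq T a u s, fseq T a u (s+1))}).Reachable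
      (fseq T a u (s+1)) x := by
    intro hsk' hreach
    have hP1 : P (s+1) := by
      intro i hi
      rcases Nat.lt_succ_iff_lt_or_eq.mp hi with h | h
      · exact hspec i h
      · subst h; exact hreach
    have := Nat.le_findGreatest (show s + 1 ≤ k by omega) hP1
    omega
  refine ⟨s, hsk, ?_, hspec, hnot⟩
  have hi1 : T.dist u x = s + T.dist (fseq T a u s) x := by
    rcases Nat.eq_zero_or_pos s with h0 | h0
    · rw [h0, fseq_zero, Nat.zero_add]
    · have hs1 := hspec (s-1) (by omega)
      rw [show s - 1 + 1 = s from by omega] at hs1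
      have hadjs : T.Adj (fseq T a u (s-1)) (fseq T a u s) := by
        have := fseq_adj (a := a) (u := u) hT (t := s-1) (by omega)
        rwa [show s - 1 + 1 = s from by omega] at this
      have hreachu : (T.deleteEdges {s(fseq T a u (s-1), fseq T a u s)}).Reachable
          (fseq T a u (s-1)) u := by
        have := chain_reach hT (show 0 ≤ s-1 by omega) (show s-1 ≤ k by omega)
          (i := s-1) (Or.inr ⟨le_rfl, by omega⟩)
        rw [show s - 1 + 1 = s from by omega, fseq_zero] at this
        exact this.symm
      have hsplit := dist_split hT hadjs hreachu hs1
      have hds := (fseq_dist (a := a) (u := u) hT (s-1) (by omega)).1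
      omega
  have hi2 : T.dist x a + s = T.dist x (fseq T a u s) + k := by
    rcases eq_or_lt_of_le hsk with heq | hlt
    · have hfa : fseq T a u s = a := by rw [heq, hk]; exact fseq_last hT
      rw [hfa]; omega
    · have hnr := hnot hlt
      have hadjs : T.Adj (fseq T a u s) (fseq T a u (s+1)) := fseq_adj hT hlt
      have hnear : (T.deleteEdges {s(fseq T a u s, fseq T a u (s+1))}).Reachable
          (fseq T a u s) x := by
        rcases side_or hT hadjs x with h | h
        · exact h
        · exact absurd h hnr
      have hfar : (T.deleteEdges {s(fseq T a u s, fseq T a u (s+1))}).Reachable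
          (fseq T a u (s+1)) a := by
        have := chain_reach hT (show s+1 ≤ k by omega) le_rfl (i := s) (Or.inl (by omega))
        rwa [show fseq T a u k = a from fseq_last hT] at this
      have hsplit := dist_split hT hadjs hnear hfar
      have hds := (fseq_dist (a := a) (u := u) hT (s+1) (by omega)).2
      omega
  have hd1 : T.dist (fseq T a u s) x = T.dist x (fseq T a u s) := dist_comm
  omega

end Reach
section Leaf
variable [Fintype V] {T : SimpleGraph V}

lemma leaf_exists (hT : T.IsTree) (hdeg : ∀ x, ¬ IsLeaf T x → 3 ≤ ncDeg T x)
    {p q : V} (hpq : T.Adj p q) :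
    ∃ g, IsLeaf T g ∧ (T.deleteEdges {s(p,q)}).Reachable q g := by
  classical
  by_cases hq : IsLeaf T q
  · exact ⟨q, hq, Reachable.refl _⟩
  obtain ⟨w, hw, hwp⟩ : ∃ w, T.Adj q w ∧ w ≠ p := by
    have h3 := hdeg q hq
    by_contra h
    push_neg at h
    have hsub : T.neighborSet q ⊆ {p} := fun z hz => h z hz
    have := Set.ncard_le_ncard hsub (Set.finite_singleton p)
    rw [Set.ncard_singleton] at this
    rw [ncDeg] at h3
    omega
  set S := {x | (T.deleteEdges {s(p,q)}).Reachable q x} with hS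
  obtain ⟨z, hzS, hzmax⟩ := Set.exists_max_image S (fun x => T.dist q x)
    (Set.toFinite S) ⟨q, Reachable.refl _⟩
  refine ⟨z, ?_, hzS⟩
  by_contra hzleaf
  have hwS : w ∈ S := by
    refine reach_del_of_walk (Walk.cons hw Walk.nil) ?_
    simp only [Walk.edges_cons, Walk.edges_nil, List.mem_singleton]
    intro hcon
    rcases Sym2.eq_iff.mp hcon with ⟨h1, h2⟩ | ⟨h1, h2⟩
    · exact T.irrefl (h1 ▸ hpq)
    · exact hwp h1.symm
  have hdqw : T.dist q w = 1 := by
    rw [dist_eq_one_iff_adj]; exact hw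
  have hz1 : 1 ≤ T.dist q z := by
    have := hzmax w hwS
    omega
  have hzq : z ≠ q := by
    rintro rfl
    rw [SimpleGraph.dist_self] at hz1; omega
  obtain ⟨Wz, hWz, hWze⟩ := reach_del_iff.mp hzS
  obtain ⟨y₁, hy₁adj, W', hcons⟩ := Walk.exists_eq_cons_of_ne hzq Wz.reverse
  have hy₁mem : s(z, y₁) ∈ Wz.edges := by
    have h1 : s(z, y₁) ∈ Wz.reverse.edges := by rw [hcons]; simp
    rwa [Walk.edges_reverse, List.mem_reverse] at h1
  obtain ⟨m, hm, hmy⟩ : ∃ m, T.Adj z m ∧ m ≠ y₁ := by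
    have h3 := hdeg z hzleaf
    by_contra hcon
    push_neg at hcon
    have hsub : T.neighborSet z ⊆ {y₁} := fun o ho => hcon o ho
    have := Set.ncard_le_ncard hsub (Set.finite_singleton _)
    rw [Set.ncard_singleton] at this
    rw [ncDeg] at h3
    omega
  have hmW : m ∉ Wz.support := by
    intro hmem
    have hD : (Wz.dropUntil m hmem).IsPath := hWz.dropUntil hmem
    have hsingle : (Walk.cons hm.symm Walk.nil : T.Walk m z).IsPath := by
      rw [Walk.isPath_def]; simp [hm.ne']
    have huniq := path_unique hT hD hsingle
    have hmz : s(m, z) ∈ Wz.edges := by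
      have h1 : s(m, z) ∈ (Wz.dropUntil m hmem).edges := by rw [huniq]; simp
      exact Wz.edges_dropUntil_subset hmem h1
    have := end_unique hWz (by rwa [Sym2.eq_swap] at hmz) hy₁mem
    exact hmy this
  have hedge_ne : s(z, m) ≠ s(p, q) := by
    intro hcontra
    have hzr : (T.deleteEdges {s(p,q)}).Reachable q z := hzS
    rcases Sym2.eq_iff.mp hcontra with ⟨h1, h2⟩ | ⟨h1, h2⟩
    · rw [h1] at hzr
      exact not_reach_del hT hpq hzr.symm
    · exact hzq h1
  have hmS : m ∈ S := hzS.trans (reach_del_of_walk (Walk.cons hm Walk.nil)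
    (by simp only [Walk.edges_cons, Walk.edges_nil, List.mem_singleton]
        exact fun h => hedge_ne h.symm))
  have hWm : (Wz.concat hm).IsPath := by
    rw [Walk.isPath_def, Walk.support_concat, List.nodup_append]
    exact ⟨hWz.support_nodup, List.nodup_singleton _,
      fun o ho1 b ho2 hob => hmW (by subst hob; exact (List.mem_singleton.mp ho2) ▸ ho1)⟩
  have hdm : T.dist q m = T.dist q z + 1 := by
    have h1 := path_length_eq_dist hT hWm
    rw [Walk.length_concat] at h1
    have h2 := path_length_eq_dist hT hWz
    omega
  have := hzmax m hmS
  omega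

lemma branch_leaf (hT : T.IsTree) (hdeg : ∀ x, ¬ IsLeaf T x → 3 ≤ ncDeg T x)
    {u a : V} {t : ℕ} (ht0 : 0 < t) (htk : t < T.dist u a) :
    ∃ g, IsLeaf T g ∧
      (T.deleteEdges {s(fseq T a u (t-1), fseq T a u t)}).Reachable (fseq T a u t) g ∧
      (∀ s', t ≤ s' → s' < T.dist u a →
        ¬ (T.deleteEdges {s(fseq T a u s', fseq T a u (s'+1))}).Reachable
            (fseq T a u (s'+1)) g) ∧
      g ≠ a := by
  classical
  set k := T.dist u a with hk
  have hadj2 : T.Adj (fseq T a u t) (fseq T a u (t+1)) := fseq_adj hT (by omega)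
  have hadj1 : T.Adj (fseq T a u (t-1)) (fseq T a u t) := by
    have := fseq_adj (a := a) (u := u) hT (t := t-1) (by omega)
    rwa [show t - 1 + 1 = t from by omega] at this
  have hne13 : fseq T a u (t-1) ≠ fseq T a u (t+1) :=
    fseq_inj hT (by omega) (by omega) (by omega)
  have hpair : ({fseq T a u (t-1), fseq T a u (t+1)} : Set V) ⊆
      T.neighborSet (fseq T a u t) := by
    intro o ho
    rcases Set.mem_insert_iff.mp ho with rfl | ho
    · exact hadj1.symm
    · rw [Set.mem_singleton_iff] at ho
      subst ho
      exact hadj2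
  have hnl : ¬ IsLeaf T (fseq T a u t) := by
    intro hl
    rw [IsLeaf, ncDeg] at hl
    have h2 : ({fseq T a u (t-1), fseq T a u (t+1)} : Set V).ncard = 2 :=
      Set.ncard_pair hne13
    have := Set.ncard_le_ncard hpair (Set.toFinite _)
    omega
  obtain ⟨z, hz, hz1, hz2⟩ : ∃ z, T.Adj (fseq T a u t) z ∧ z ≠ fseq T a u (t-1) ∧
      z ≠ fseq T a u (t+1) := by
    have h3 := hdeg _ hnl
    by_contra hcon
    push_neg at hcon
    have hsub : T.neighborSet (fseq T a u t) ⊆ {fseq T a u (t-1), fseq T a u (t+1)} := by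
      intro o ho
      by_cases h1 : o = fseq T a u (t-1)
      · exact Set.mem_insert_iff.mpr (Or.inl h1)
      · exact Set.mem_insert_iff.mpr (Or.inr (hcon o ho h1))
    have h4 := Set.ncard_le_ncard hsub (Set.toFinite _)
    have h2 : ({fseq T a u (t-1), fseq T a u (t+1)} : Set V).ncard = 2 :=
      Set.ncard_pair hne13
    rw [ncDeg] at h3
    omega
  obtain ⟨g, hgleaf, hgreach⟩ := leaf_exists hT hdeg hz
  obtain ⟨W, hWp, hWe⟩ := reach_del_iff.mp hgreach
  have hftW : fseq T a u t ∉ W.support := by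
    intro hmem
    have hD : (W.takeUntil _ hmem).IsPath := hWp.takeUntil hmem
    have hsingle : ((Walk.cons hz Walk.nil : T.Walk (fseq T a u t) z)).IsPath := by
      rw [Walk.isPath_def]; simp [hz.ne]
    have huniq := path_unique hT hD hsingle.reverse
    have h1 : s(fseq T a u t, z) ∈ (W.takeUntil _ hmem).edges := by
      rw [huniq, Walk.edges_reverse]
      simp [Sym2.eq_swap]
    exact hWe (W.edges_takeUntil_subset hmem h1)
  have hγ1 : (T.deleteEdges {s(fseq T a u (t-1), fseq T a u t)}).Reachable
      (fseq T a u t) g := by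
    refine reach_del_of_walk (Walk.cons hz W) ?_
    rw [Walk.edges_cons]
    intro hmem
    rcases List.mem_cons.mp hmem with hc | hc
    · rcases Sym2.eq_iff.mp hc with ⟨h1, h2⟩ | ⟨h1, h2⟩
      · exact fseq_inj hT (by omega) (by omega) (by omega) h1
      · exact hz1 h1.symm
    · exact hftW (W.snd_mem_support_of_mem_edges hc)
  have hγ2 : ∀ s', t ≤ s' → s' < k →
      ¬ (T.deleteEdges {s(fseq T a u s', fseq T a u (s'+1))}).Reachable
          (fseq T a u (s'+1)) g := by
    intro s' hts' hs'k hreach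
    have hfs'W : fseq T a u s' ∉ W.support := by
      intro hmem
      rcases eq_or_lt_of_le hts' with heq | hlt
      · rw [← heq] at hmem; exact hftW hmem
      · have hD : (W.takeUntil _ hmem).IsPath := hWp.takeUntil hmem
        have hftT : fseq T a u t ∉ (W.takeUntil _ hmem).support :=
          fun hc => hftW (W.support_takeUntil_subset hmem hc)
        have hQp : (Walk.cons hz (W.takeUntil _ hmem)).IsPath := by
          rw [Walk.isPath_def, Walk.support_cons, List.nodup_cons]
          exact ⟨hftT, hD.support_nodup⟩
        obtain ⟨wch, hwchp, _, _, hwchc, _⟩ :=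
          chain_exists (a := a) (u := u) hT (s' - t) t (by omega)
        have hcast : t + (s' - t) = s' := by omega
        have hequ : Walk.cons hz (W.takeUntil _ hmem) =
            wch.copy rfl (by rw [hcast]) :=
          path_unique hT hQp (by rw [Walk.isPath_copy]; exact hwchp)
        have hc1 : s(fseq T a u t, fseq T a u (t+1)) ∈
            (wch.copy rfl (show fseq T a u (t + (s' - t)) = fseq T a u s' from
              by rw [hcast])).edges := by
          rw [Walk.edges_copy]; exact hwchc t le_rfl (by omega)
        rw [← hequ, Walk.edges_cons] at hc1
        rcases List.mem_cons.mp hc1 with hc | hc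
        · rcases Sym2.eq_iff.mp hc with ⟨h1, h2⟩ | ⟨h1, h2⟩
          · exact hz2 h2.symm
          · exact fseq_inj hT (by omega) (by omega) (by omega) h2
        · exact hftT ((W.takeUntil _ hmem).fst_mem_support_of_mem_edges hc)
    have hnear : (T.deleteEdges {s(fseq T a u s', fseq T a u (s'+1))}).Reachable
        (fseq T a u s') g := by
      have hr1 := (chain_reach (a := a) (u := u) hT hts'
        (show s' ≤ T.dist u a by omega)
        (i := s') (Or.inr ⟨le_rfl, show s' < T.dist u a by omega⟩)).symm
      refine hr1.trans (reach_del_of_walk (Walk.cons hz W) ?_)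
      rw [Walk.edges_cons]
      intro hmem
      rcases List.mem_cons.mp hmem with hc | hc
      · rcases Sym2.eq_iff.mp hc with ⟨h1, h2⟩ | ⟨h1, h2⟩
        · have hst : s' = t := by
            by_contra hne
            exact fseq_inj hT (by omega) (by omega) hne h1
          rw [hst] at h2
          exact hz2 h2.symm
        · exact fseq_inj hT (by omega) (by omega) (by omega) h2
      · exact hfs'W (W.fst_mem_support_of_mem_edges hc)
    exact side_not_both hT (fseq_adj hT hs'k) hnear hreach
  have hga : g ≠ a := by
    intro heq
    apply hγ2 (k-1) (by omega) (by omega)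
    rw [show k - 1 + 1 = k from by omega, show fseq T a u k = a from fseq_last hT, heq]
  exact ⟨g, hgleaf, hγ1, hγ2, hga⟩

end Leaf
section Cyc
variable {C : SimpleGraph V}

lemma induced_path {S : Set V} (hconn : (C.induce S).Connected) {x y : V}
    (hx : x ∈ S) (hy : y ∈ S) :
    ∃ π : C.Walk x y, π.IsPath ∧ ∀ z ∈ π.support, z ∈ S := by
  classical
  obtain ⟨w⟩ := hconn ⟨x, hx⟩ ⟨y, hy⟩
  refine ⟨w.bypass.map (Embedding.induce S).toHom, ?_, ?_⟩
  · exact Walk.map_isPath_of_injective (fun a b hab => Subtype.val_injective hab)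
      w.bypass_isPath
  · intro z hz
    replace hz : z ∈ w.bypass.support.map (Embedding.induce (G := C) S).toHom := by
      rw [← Walk.support_map]; exact hz
    rw [List.mem_map] at hz
    obtain ⟨z', _, rfl⟩ := hz
    exact z'.property

lemma cl1 {S : Set V} (hconn : (C.induce S).Connected) {p : V} (hp : p ∈ S)
    (hnbr : ∀ y, C.Adj p y → y ∉ S) {x : V} (hx : x ∈ S) : x = p := by
  by_contra hxp
  obtain ⟨w⟩ := hconn ⟨p, hp⟩ ⟨x, hx⟩
  have hne : (⟨p, hp⟩ : S) ≠ ⟨x, hx⟩ := fun h => hxp (congrArg Subtype.val h).symm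
  obtain ⟨b, hadj, w', _⟩ := Walk.exists_eq_cons_of_ne hne w
  exact hnbr b.val hadj b.property

lemma force (hreg : ∀ y ∈ C.support, (C.neighborSet y).ncard = 2) :
    ∀ {m x : V} (t1 : C.Walk m x) {w y : V} (h1 : C.Adj w m) (h2 : C.Adj w m)
      (t2 : C.Walk m y), (Walk.cons h1 t1).IsPath → (Walk.cons h2 t2).IsPath →
      t1.length ≤ t2.length →
      (Walk.cons h1 t1).support.IsPrefix (Walk.cons h2 t2).support := by
  intro m x t1
  induction t1 with
  | nil =>
    intro w y h1 h2 t2 hp1 hp2 hlen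
    rw [Walk.support_cons, Walk.support_cons, Walk.support_nil, t2.support_eq_cons]
    exact List.cons_prefix_cons.mpr ⟨rfl, List.cons_prefix_cons.mpr ⟨rfl, List.nil_prefix⟩⟩
  | @cons mm m1 xx h' t1' ih =>
    intro w y h1 h2 t2 hp1 hp2 hlen
    cases t2 with
    | nil => simp at hlen
    | @cons _ m2 _ h2' t2' =>
      have hmsup : mm ∈ C.support := (mem_support C).mpr ⟨w, h1.symm⟩
      obtain ⟨α, β, hab, hnb⟩ := Set.ncard_eq_two.mp (hreg mm hmsup)
      have hw : w ∈ C.neighborSet mm := h1.symm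
      have hm1 : m1 ∈ C.neighborSet mm := h'
      have hm2 : m2 ∈ C.neighborSet mm := h2'
      have hm1mem : m1 ∈ (Walk.cons h' t1').support := by
        rw [Walk.support_cons]; exact List.mem_cons_of_mem _ t1'.start_mem_support
      have hm2mem : m2 ∈ (Walk.cons h2' t2').support := by
        rw [Walk.support_cons]; exact List.mem_cons_of_mem _ t2'.start_mem_support
      have hm1w : m1 ≠ w := by
        intro heq
        have hnd := hp1.support_nodup
        rw [Walk.support_cons, List.nodup_cons] at hnd
        exact hnd.1 (heq ▸ hm1mem)
      have hm2w : m2 ≠ w := by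
        intro heq
        have hnd := hp2.support_nodup
        rw [Walk.support_cons, List.nodup_cons] at hnd
        exact hnd.1 (heq ▸ hm2mem)
      have hm12 : m1 = m2 := by
        rw [hnb] at hw hm1 hm2
        simp only [Set.mem_insert_iff, Set.mem_singleton_iff] at hw hm1 hm2
        rcases hw with hw | hw <;> rcases hm1 with h1' | h1' <;> rcases hm2 with h2'' | h2'' <;>
          first
            | exact h1'.trans h2''.symm
            | exact absurd (h1'.trans hw.symm) hm1w
            | exact absurd (h2''.trans hw.symm) hm2w
      subst hm12
      have hpre := ih h' h2' t2' hp1.of_cons hp2.of_cons (by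
        simp only [Walk.length_cons] at hlen; omega)
      rw [Walk.support_cons, Walk.support_cons]
      exact List.cons_prefix_cons.mpr ⟨rfl, hpre⟩

lemma internal_nbrs (hreg : ∀ y ∈ C.support, (C.neighborSet y).ncard = 2)
    {w z q : V} {π : C.Walk w z} (hπ : π.IsPath)
    (hq : q ∈ π.support) (hqw : q ≠ w) (hqz : q ≠ z) {o : V} (ho : C.Adj q o) :
    o ∈ π.support := by
  classical
  have ht : (π.takeUntil q hq).IsPath := hπ.takeUntil hq
  have hd : (π.dropUntil q hq).IsPath := hπ.dropUntil hq
  obtain ⟨n1, hn1adj, tr', hconsr⟩ :=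
    Walk.exists_eq_cons_of_ne hqw (π.takeUntil q hq).reverse
  obtain ⟨n2, hn2adj, d', hconsd⟩ := Walk.exists_eq_cons_of_ne hqz (π.dropUntil q hq)
  have hn1t : n1 ∈ (π.takeUntil q hq).support := by
    have h0 : n1 ∈ (π.takeUntil q hq).reverse.support := by
      rw [hconsr, Walk.support_cons]
      exact List.mem_cons_of_mem _ tr'.start_mem_support
    rwa [Walk.support_reverse, List.mem_reverse] at h0
  have hn2d : n2 ∈ (π.dropUntil q hq).support.tail := by
    rw [hconsd, Walk.support_cons, List.tail_cons]
    exact d'.start_mem_support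
  have hdisj : (π.takeUntil q hq).support.Disjoint (π.dropUntil q hq).support.tail := by
    have hnd := hπ.support_nodup
    conv at hnd => rw [← Walk.take_spec π hq]
    rw [Walk.support_append] at hnd
    exact List.disjoint_of_nodup_append hnd
  have hne : n1 ≠ n2 := fun h => hdisj hn1t (h ▸ hn2d)
  have hqsup : q ∈ C.support := (mem_support C).mpr ⟨o, ho⟩
  obtain ⟨α, β, hab, hnb⟩ := Set.ncard_eq_two.mp (hreg q hqsup)
  have h1 : n1 ∈ C.neighborSet q := hn1adj
  have h2 : n2 ∈ C.neighborSet q := hn2adj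
  have ho' : o ∈ C.neighborSet q := ho
  have hor : o = n1 ∨ o = n2 := by
    rw [hnb] at h1 h2 ho'
    simp only [Set.mem_insert_iff, Set.mem_singleton_iff] at h1 h2 ho'
    rcases h1 with h1 | h1 <;> rcases h2 with h2 | h2 <;> rcases ho' with ho' | ho' <;>
      first
        | exact Or.inl (ho'.trans h1.symm)
        | exact Or.inr (ho'.trans h2.symm)
        | exact absurd (h1.trans h2.symm) hne
  rcases hor with rfl | rfl
  · exact π.support_takeUntil_subset hq hn1t
  · exact π.support_dropUntil_subset hq (List.tail_subset _ hn2d)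

lemma cl3 (hreg : ∀ y ∈ C.support, (C.neighborSet y).ncard = 2) {S : Set V}
    (hconn : (C.induce S).Connected)
    {q1 q2 q3 x1 x2 x3 : V} (hq1 : q1 ∈ S) (hq2 : q2 ∈ S) (hq3 : q3 ∈ S)
    (h12 : q1 ≠ q2) (h13 : q1 ≠ q3) (h23 : q2 ≠ q3)
    (ha1 : C.Adj q1 x1) (hx1 : x1 ∉ S) (ha2 : C.Adj q2 x2) (hx2 : x2 ∉ S)
    (ha3 : C.Adj q3 x3) (hx3 : x3 ∉ S) : False := by
  obtain ⟨σ1, hσ1, hσ1S⟩ := induced_path hconn hq3 hq1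
  obtain ⟨σ2, hσ2, hσ2S⟩ := induced_path hconn hq3 hq2
  obtain ⟨m1, hm1adj, τ1, hc1⟩ := Walk.exists_eq_cons_of_ne (Ne.symm h13) σ1
  obtain ⟨m2, hm2adj, τ2, hc2⟩ := Walk.exists_eq_cons_of_ne (Ne.symm h23) σ2
  have hm1S : m1 ∈ S := hσ1S m1 (by
    rw [hc1, Walk.support_cons]; exact List.mem_cons_of_mem _ τ1.start_mem_support)
  have hm2S : m2 ∈ S := hσ2S m2 (by
    rw [hc2, Walk.support_cons]; exact List.mem_cons_of_mem _ τ2.start_mem_support)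
  have hq3sup : q3 ∈ C.support := (mem_support C).mpr ⟨x3, ha3⟩
  obtain ⟨α, β, hab, hnb⟩ := Set.ncard_eq_two.mp (hreg q3 hq3sup)
  have hx3n : x3 ∈ C.neighborSet q3 := ha3
  have hm1n : m1 ∈ C.neighborSet q3 := hm1adj
  have hm2n : m2 ∈ C.neighborSet q3 := hm2adj
  have hm1x : m1 ≠ x3 := fun h => hx3 (h ▸ hm1S)
  have hm2x : m2 ≠ x3 := fun h => hx3 (h ▸ hm2S)
  have hm12 : m1 = m2 := by
    rw [hnb] at hx3n hm1n hm2n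
    simp only [Set.mem_insert_iff, Set.mem_singleton_iff] at hx3n hm1n hm2n
    rcases hx3n with h0 | h0 <;> rcases hm1n with h1 | h1 <;> rcases hm2n with h2 | h2 <;>
      first
        | exact h1.trans h2.symm
        | exact absurd (h1.trans h0.symm) hm1x
        | exact absurd (h2.trans h0.symm) hm2x
  subst hm12
  have main : ∀ {y1 y2 e1 : V}, y1 ≠ y2 → y1 ≠ q3 →
      ∀ (ρ1 : C.Walk m1 y1) (ρ2 : C.Walk m1 y2) (hh1 : C.Adj q3 m1) (hh2 : C.Adj q3 m1),
      (Walk.cons hh1 ρ1).IsPath → (Walk.cons hh2 ρ2).IsPath →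
      (∀ z ∈ (Walk.cons hh2 ρ2).support, z ∈ S) →
      ρ1.length ≤ ρ2.length → C.Adj y1 e1 → e1 ∉ S → False := by
    intro y1 y2 e1 hy12 hy13 ρ1 ρ2 hh1 hh2 hp1 hp2 hS2 hlen hadj he1
    have hpre := force hreg ρ1 hh1 hh2 ρ2 hp1 hp2 hlen
    have hy1mem : y1 ∈ (Walk.cons hh2 ρ2).support :=
      hpre.subset (Walk.end_mem_support _)
    have hmem := internal_nbrs hreg hp2 hy1mem hy13 hy12 hadj
    exact he1 (hS2 e1 hmem)
  have hσ1' : (Walk.cons hm1adj τ1).IsPath := hc1 ▸ hσ1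
  have hσ2' : (Walk.cons hm2adj τ2).IsPath := hc2 ▸ hσ2
  have hσ1S' : ∀ z ∈ (Walk.cons hm1adj τ1).support, z ∈ S := fun z hz => hσ1S z (hc1 ▸ hz)
  have hσ2S' : ∀ z ∈ (Walk.cons hm2adj τ2).support, z ∈ S := fun z hz => hσ2S z (hc2 ▸ hz)
  rcases le_total τ1.length τ2.length with hle | hle
  · exact main h12 h13 τ1 τ2 hm1adj hm2adj hσ1' hσ2' hσ2S' hle ha1 hx1
  · exact main h12.symm h23 τ2 τ1 hm2adj hm1adj hσ2' hσ1' hσ1S' hle ha2 hx2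

end Cyc
section Side
variable [Fintype V]

lemma planar' (H : HalinGraph V) {p q : V} (h : H.T.Adj p q) :
    (H.C.induce {x : V | IsLeaf H.T x ∧
      (H.T.deleteEdges {s(p, q)}).Reachable q x}).Connected := by
  have h0 := H.planar q p h.symm
  rwa [show s(q,p) = s(p,q) from Sym2.eq_swap] at h0

lemma leaf_of_cadj (H : HalinGraph V) {x y : V} (h : H.C.Adj x y) : IsLeaf H.T x := by
  have h0 : x ∈ H.C.support := (mem_support _).mpr ⟨y, h⟩
  rwa [H.support_C] at h0

lemma s6 (H : HalinGraph V) {u v a b ℓ ℓ' : V} (huv : H.T.Adj u v)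
    (ha : (H.T.deleteEdges {s(u,v)}).Reachable u a)
    (hb : ¬ (H.T.deleteEdges {s(u,v)}).Reachable u b)
    (hab : H.C.Adj a b) (hll : H.C.Adj ℓ ℓ') (hlb : ℓ' ≠ b) :
    (H.T.dist u ℓ : ℤ) + H.T.dist u a - H.T.dist ℓ a ≤
      (H.T.dist u ℓ' : ℤ) + H.T.dist u a - H.T.dist ℓ' a + 2 := by
  classical
  by_contra hcon
  push_neg at hcon
  have hT := H.tree_isTree
  obtain ⟨s, hsk, hψ, hsall, hsnot⟩ := psi_exists (u := u) (a := a) hT ℓ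
  obtain ⟨s', hsk', hψ', hsall', hsnot'⟩ := psi_exists (u := u) (a := a) hT ℓ'
  have hss : s' + 2 ≤ s := by omega
  have htk : s' + 1 < H.T.dist u a := by omega
  have hleafa : IsLeaf H.T a := leaf_of_cadj H hab
  have hleafl : IsLeaf H.T ℓ := leaf_of_cadj H hll
  have hleafl' : IsLeaf H.T ℓ' := leaf_of_cadj H hll.symm
  set f := fseq H.T a u with hf
  set St : Set V := {x | IsLeaf H.T x ∧
    (H.T.deleteEdges {s(f s', f (s'+1))}).Reachable (f (s'+1)) x} with hSt
  set Ss : Set V := {x | IsLeaf H.T x ∧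
    (H.T.deleteEdges {s(f (s-1), f (s-1+1))}).Reachable (f (s-1+1)) x} with hSs
  have hadjt : H.T.Adj (f s') (f (s'+1)) := fseq_adj hT (by omega)
  have hadjs : H.T.Adj (f (s-1)) (f (s-1+1)) := fseq_adj hT (by omega)
  have hconnt : (H.C.induce St).Connected := planar' H hadjt
  have hconns : (H.C.induce Ss).Connected := planar' H hadjs
  have hlSt : ℓ ∈ St := ⟨hleafl, hsall s' (by omega)⟩
  have hlSs : ℓ ∈ Ss := ⟨hleafl, hsall (s-1) (by omega)⟩
  have hl'St : ℓ' ∉ St := fun hmem => hsnot' (by omega) hmem.2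
  have haSt : a ∈ St := by
    refine ⟨hleafa, ?_⟩
    have h0 := chain_reach (a := a) (u := u) hT (show s' + 1 ≤ H.T.dist u a by omega)
      le_rfl (i := s') (Or.inl (by omega))
    rwa [fseq_last hT] at h0
  have haSs : a ∈ Ss := by
    refine ⟨hleafa, ?_⟩
    have h0 := chain_reach (a := a) (u := u) hT (show s - 1 + 1 ≤ H.T.dist u a by omega)
      le_rfl (i := s-1) (Or.inl (by omega))
    rwa [fseq_last hT] at h0
  have hSsSt : Ss ⊆ St := by
    intro x hx
    exact ⟨hx.1, nest hT (by omega) (by omega) hx.2⟩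
  have hsub : ∀ x ∈ St, (H.T.deleteEdges {s(u,v)}).Reachable u x :=
    fun x hx => ssub hT huv ha (by omega) hx.2
  have hbSt : b ∉ St := fun hmem => hb (hsub b hmem)
  have hbSs : b ∉ Ss := fun hmem => hbSt (hSsSt hmem)
  have hl'Ss : ℓ' ∉ Ss := fun hmem => hl'St (hSsSt hmem)
  obtain ⟨g, hgleaf, hγ1, hγ2, hga⟩ := branch_leaf (u := u) (a := a) hT H.nonleaf_degree
    (t := s'+1) (by omega) htk
  have hgSt : g ∈ St := by
    refine ⟨hgleaf, ?_⟩
    have h0 := hγ1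
    rwa [show s' + 1 - 1 = s' from rfl] at h0
  have hgSs : g ∉ Ss := fun hmem => hγ2 (s-1) (by omega) (by omega) hmem.2
  have hgSA : (H.T.deleteEdges {s(u,v)}).Reachable u g := hsub g hgSt
  have hsupl : ℓ ∈ H.C.support := (mem_support _).mpr ⟨ℓ', hll⟩
  have hsupa : a ∈ H.C.support := (mem_support _).mpr ⟨b, hab⟩
  by_cases hla : ℓ = a
  · subst hla
    have hnbrs : ∀ y, H.C.Adj ℓ y → y ∉ St := by
      intro y hy
      obtain ⟨α, β, hne2, hnb⟩ := Set.ncard_eq_two.mp (H.two_regular ℓ hsupl)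
      have h1 : b ∈ H.C.neighborSet ℓ := hab
      have h2 : ℓ' ∈ H.C.neighborSet ℓ := hll
      have h3 : y ∈ H.C.neighborSet ℓ := hy
      rw [hnb] at h1 h2 h3
      simp only [Set.mem_insert_iff, Set.mem_singleton_iff] at h1 h2 h3
      have hor : y = b ∨ y = ℓ' := by
        rcases h1 with h1 | h1 <;> rcases h2 with h2 | h2 <;> rcases h3 with h3 | h3 <;>
          first
            | exact Or.inl (h3.trans h1.symm)
            | exact Or.inr (h3.trans h2.symm)
            | exact absurd (h2.trans h1.symm) hlb
      rcases hor with rfl | rfl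
      · exact hbSt
      · exact hl'St
    exact hga (cl1 hconnt haSt hnbrs hgSt)
  · obtain ⟨π, hπ, hπS⟩ := induced_path hconnt hgSt haSt
    obtain ⟨d, hd, hdf, hds⟩ := π.exists_boundary_dart {x | x ∉ Ss} hgSs
      (fun hc => hc haSs)
    have hq'St : d.fst ∈ St := hπS _ (Walk.dart_fst_mem_support_of_mem_darts _ hd)
    have hqSt : d.snd ∈ St := hπS _ (Walk.dart_snd_mem_support_of_mem_darts _ hd)
    have hqSs : d.snd ∈ Ss := not_not.mp hds
    have hq'Ss : d.fst ∉ Ss := hdf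
    have hdadj : H.C.Adj d.fst d.snd := d.adj
    by_cases hql : d.snd = ℓ
    · have hq'l' : d.fst ≠ ℓ' := fun h => hl'St (h ▸ hq'St)
      have hnbrs : ∀ y, H.C.Adj ℓ y → y ∉ Ss := by
        intro y hy
        obtain ⟨α, β, hne2, hnb⟩ := Set.ncard_eq_two.mp (H.two_regular ℓ hsupl)
        have h1 : ℓ' ∈ H.C.neighborSet ℓ := hll
        have h2 : d.fst ∈ H.C.neighborSet ℓ := (hql ▸ hdadj).symm
        have h3 : y ∈ H.C.neighborSet ℓ := hy
        rw [hnb] at h1 h2 h3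
        simp only [Set.mem_insert_iff, Set.mem_singleton_iff] at h1 h2 h3
        have hor : y = ℓ' ∨ y = d.fst := by
          rcases h1 with h1 | h1 <;> rcases h2 with h2 | h2 <;> rcases h3 with h3 | h3 <;>
            first
              | exact Or.inl (h3.trans h1.symm)
              | exact Or.inr (h3.trans h2.symm)
              | exact absurd (h1.trans h2.symm) hq'l'.symm
        rcases hor with rfl | rfl
        · exact hl'Ss
        · exact hq'Ss
      exact hla (cl1 hconns hlSs hnbrs haSs).symm
    · by_cases hqa : d.snd = a
      · have hq'b : d.fst ≠ b := by
          intro h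
          have h0 := hsub _ hq'St
          rw [h] at h0
          exact hb h0
        have hnbrs : ∀ y, H.C.Adj a y → y ∉ Ss := by
          intro y hy
          obtain ⟨α, β, hne2, hnb⟩ := Set.ncard_eq_two.mp (H.two_regular a hsupa)
          have h1 : b ∈ H.C.neighborSet a := hab
          have h2 : d.fst ∈ H.C.neighborSet a := (hqa ▸ hdadj).symm
          have h3 : y ∈ H.C.neighborSet a := hy
          rw [hnb] at h1 h2 h3
          simp only [Set.mem_insert_iff, Set.mem_singleton_iff] at h1 h2 h3
          have hor : y = b ∨ y = d.fst := by
            rcases h1 with h1 | h1 <;> rcases h2 with h2 | h2 <;> rcases h3 with h3 | h3 <;>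
              first
                | exact Or.inl (h3.trans h1.symm)
                | exact Or.inr (h3.trans h2.symm)
                | exact absurd (h1.trans h2.symm) hq'b.symm
          rcases hor with rfl | rfl
          · exact hbSs
          · exact hq'Ss
        exact hla (cl1 hconns haSs hnbrs hlSs)
      · exact cl3 H.two_regular hconns hlSs haSs hqSs hla (Ne.symm hql) (Ne.symm hqa)
          hll hl'Ss hab hbSs hdadj.symm hq'Ss

lemma s4 (H : HalinGraph V) {u v a b a' b' : V} (huv : H.T.Adj u v)
    (ha : (H.T.deleteEdges {s(u,v)}).Reachable u a)
    (hb : ¬ (H.T.deleteEdges {s(u,v)}).Reachable u b)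
    (hab : H.C.Adj a b)
    (ha' : (H.T.deleteEdges {s(u,v)}).Reachable u a')
    (hb' : ¬ (H.T.deleteEdges {s(u,v)}).Reachable u b')
    (hab' : H.C.Adj a' b') (hne : s(a,b) ≠ s(a',b')) :
    (H.T.dist u a' : ℤ) + H.T.dist u a - H.T.dist a' a ≤ 2 := by
  classical
  by_contra hcon
  push_neg at hcon
  have hT := H.tree_isTree
  obtain ⟨s', hsk', hψ', hsall', hsnot'⟩ := psi_exists (u := u) (a := a) hT a'
  have hs2 : 2 ≤ s' := by omega
  have hk2 : 2 ≤ H.T.dist u a := by omega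
  have hleafa : IsLeaf H.T a := leaf_of_cadj H hab
  have hleafa' : IsLeaf H.T a' := leaf_of_cadj H hab'
  set f := fseq H.T a u with hf
  set S1 : Set V := {x | IsLeaf H.T x ∧
    (H.T.deleteEdges {s(f 0, f (0+1))}).Reachable (f (0+1)) x} with hS1
  set Ss : Set V := {x | IsLeaf H.T x ∧
    (H.T.deleteEdges {s(f (s'-1), f (s'-1+1))}).Reachable (f (s'-1+1)) x} with hSs
  have hadj1 : H.T.Adj (f 0) (f (0+1)) := fseq_adj hT (by omega)
  have hadjs : H.T.Adj (f (s'-1)) (f (s'-1+1)) := fseq_adj hT (by omega)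
  have hconn1 : (H.C.induce S1).Connected := planar' H hadj1
  have hconns : (H.C.induce Ss).Connected := planar' H hadjs
  have haS1 : a ∈ S1 := by
    refine ⟨hleafa, ?_⟩
    have h0 := chain_reach (a := a) (u := u) hT (show 0 + 1 ≤ H.T.dist u a by omega)
      le_rfl (i := 0) (Or.inl (by omega))
    rwa [fseq_last hT] at h0
  have haSs : a ∈ Ss := by
    refine ⟨hleafa, ?_⟩
    have h0 := chain_reach (a := a) (u := u) hT (show s' - 1 + 1 ≤ H.T.dist u a by omega)
      le_rfl (i := s'-1) (Or.inl (by omega))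
    rwa [fseq_last hT] at h0
  have ha'S1 : a' ∈ S1 := ⟨hleafa', hsall' 0 (by omega)⟩
  have ha'Ss : a' ∈ Ss := ⟨hleafa', hsall' (s'-1) (by omega)⟩
  have hSsS1 : Ss ⊆ S1 := by
    intro x hx
    exact ⟨hx.1, nest hT (by omega) (by omega) hx.2⟩
  have hsub : ∀ x ∈ S1, (H.T.deleteEdges {s(u,v)}).Reachable u x :=
    fun x hx => ssub hT huv ha (by omega) hx.2
  have hbS1 : b ∉ S1 := fun hmem => hb (hsub b hmem)
  have hb'S1 : b' ∉ S1 := fun hmem => hb' (hsub b' hmem)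
  have hbSs : b ∉ Ss := fun hmem => hbS1 (hSsS1 hmem)
  have hb'Ss : b' ∉ Ss := fun hmem => hb'S1 (hSsS1 hmem)
  obtain ⟨g, hgleaf, hγ1, hγ2, hga⟩ := branch_leaf (u := u) (a := a) hT H.nonleaf_degree
    (t := 1) (by omega) (by omega)
  have hgS1 : g ∈ S1 := ⟨hgleaf, hγ1⟩
  have hgSs : g ∉ Ss := fun hmem => hγ2 (s'-1) (by omega) (by omega) hmem.2
  have hgSA : (H.T.deleteEdges {s(u,v)}).Reachable u g := hsub g hgS1
  have hsupa : a ∈ H.C.support := (mem_support _).mpr ⟨b, hab⟩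
  have hsupa' : a' ∈ H.C.support := (mem_support _).mpr ⟨b', hab'⟩
  have hbb' : a = a' → b ≠ b' := by
    rintro rfl h
    exact hne (by rw [h])
  have haa' : a ≠ a' := by
    intro heq
    have hbne := hbb' heq
    set SA : Set V := {x | IsLeaf H.T x ∧
      (H.T.deleteEdges {s(u,v)}).Reachable u x} with hSA
    have hconnSA : (H.C.induce SA).Connected := H.planar u v huv
    have haSA : a ∈ SA := ⟨hleafa, ha⟩
    have hgSAm : g ∈ SA := ⟨hgleaf, hgSA⟩
    have hnbrs : ∀ y, H.C.Adj a y → y ∉ SA := by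
      intro y hy
      obtain ⟨α, β, hne2, hnb⟩ := Set.ncard_eq_two.mp (H.two_regular a hsupa)
      have h1 : b ∈ H.C.neighborSet a := hab
      have h2 : b' ∈ H.C.neighborSet a := heq ▸ hab'
      have h3 : y ∈ H.C.neighborSet a := hy
      rw [hnb] at h1 h2 h3
      simp only [Set.mem_insert_iff, Set.mem_singleton_iff] at h1 h2 h3
      have hor : y = b ∨ y = b' := by
        rcases h1 with h1 | h1 <;> rcases h2 with h2 | h2 <;> rcases h3 with h3 | h3 <;>
          first
            | exact Or.inl (h3.trans h1.symm)
            | exact Or.inr (h3.trans h2.symm)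
            | exact absurd (h1.trans h2.symm) hbne
      rcases hor with rfl | rfl
      · exact fun hmem => hb hmem.2
      · exact fun hmem => hb' hmem.2
    exact hga (cl1 hconnSA haSA hnbrs hgSAm)
  obtain ⟨π, hπ, hπS⟩ := induced_path hconn1 hgS1 haS1
  obtain ⟨d, hd, hdf, hds⟩ := π.exists_boundary_dart {x | x ∉ Ss} hgSs
    (fun hc => hc haSs)
  have hq'S1 : d.fst ∈ S1 := hπS _ (Walk.dart_fst_mem_support_of_mem_darts _ hd)
  have hqSs : d.snd ∈ Ss := not_not.mp hds
  have hq'Ss : d.fst ∉ Ss := hdf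
  have hdadj : H.C.Adj d.fst d.snd := d.adj
  have hq'b : d.fst ≠ b := by
    intro h
    have h0 := hsub _ hq'S1
    rw [h] at h0
    exact hb h0
  have hq'b' : d.fst ≠ b' := by
    intro h
    have h0 := hsub _ hq'S1
    rw [h] at h0
    exact hb' h0
  by_cases hqa : d.snd = a
  · have hnbrs : ∀ y, H.C.Adj a y → y ∉ Ss := by
      intro y hy
      obtain ⟨α, β, hne2, hnb⟩ := Set.ncard_eq_two.mp (H.two_regular a hsupa)
      have h1 : b ∈ H.C.neighborSet a := hab
      have h2 : d.fst ∈ H.C.neighborSet a := (hqa ▸ hdadj).symm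
      have h3 : y ∈ H.C.neighborSet a := hy
      rw [hnb] at h1 h2 h3
      simp only [Set.mem_insert_iff, Set.mem_singleton_iff] at h1 h2 h3
      have hor : y = b ∨ y = d.fst := by
        rcases h1 with h1 | h1 <;> rcases h2 with h2 | h2 <;> rcases h3 with h3 | h3 <;>
          first
            | exact Or.inl (h3.trans h1.symm)
            | exact Or.inr (h3.trans h2.symm)
            | exact absurd (h1.trans h2.symm) hq'b.symm
      rcases hor with rfl | rfl
      · exact hbSs
      · exact hq'Ss
    exact haa' (cl1 hconns haSs hnbrs ha'Ss).symm
  · by_cases hqa' : d.snd = a'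
    · have hnbrs : ∀ y, H.C.Adj a' y → y ∉ Ss := by
        intro y hy
        obtain ⟨α, β, hne2, hnb⟩ := Set.ncard_eq_two.mp (H.two_regular a' hsupa')
        have h1 : b' ∈ H.C.neighborSet a' := hab'
        have h2 : d.fst ∈ H.C.neighborSet a' := (hqa' ▸ hdadj).symm
        have h3 : y ∈ H.C.neighborSet a' := hy
        rw [hnb] at h1 h2 h3
        simp only [Set.mem_insert_iff, Set.mem_singleton_iff] at h1 h2 h3
        have hor : y = b' ∨ y = d.fst := by
          rcases h1 with h1 | h1 <;> rcases h2 with h2 | h2 <;> rcases h3 with h3 | h3 <;>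
            first
              | exact Or.inl (h3.trans h1.symm)
              | exact Or.inr (h3.trans h2.symm)
              | exact absurd (h1.trans h2.symm) hq'b'.symm
        rcases hor with rfl | rfl
        · exact hb'Ss
        · exact hq'Ss
      exact haa' (cl1 hconns ha'Ss hnbrs haSs)
    · exact cl3 H.two_regular hconns haSs ha'Ss hqSs haa' (Ne.symm hqa) (Ne.symm hqa')
        hab hbSs hab' hb'Ss hdadj.symm hq'Ss

end Side
section Assemble
variable [Fintype V]

lemma psi_nonneg {T : SimpleGraph V} (hT : T.IsTree) (u a x : V) :
    0 ≤ (T.dist u x : ℤ) + T.dist u a - T.dist x a := by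
  have h := hT.isConnected.dist_triangle (u := x) (v := u) (w := a)
  have h2 : T.dist x u = T.dist u x := dist_comm
  omega

lemma psi_adj {T : SimpleGraph V} (hT : T.IsTree) {x y : V} (hxy : T.Adj x y) (u a : V) :
    ((T.dist u x : ℤ) + T.dist u a - T.dist x a) ≤
      ((T.dist u y : ℤ) + T.dist u a - T.dist y a) + 2 := by
  have h1 : T.dist u x ≤ T.dist u y + T.dist y x := hT.isConnected.dist_triangle
  have h2 : T.dist y a ≤ T.dist y x + T.dist x a := hT.isConnected.dist_triangle
  have h3 : T.dist y x = 1 := by rw [dist_eq_one_iff_adj]; exact hxy.symm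
  omega

open scoped Classical in
/-- The two-sided potential. -/
noncomputable def Psi (H : HalinGraph V) (u v a b x : V) : ℤ :=
  if (H.T.deleteEdges {s(u,v)}).Reachable u x
  then (H.T.dist u x : ℤ) + H.T.dist u a - H.T.dist x a
  else (H.T.dist v x : ℤ) + H.T.dist v b - H.T.dist x b

lemma Psi_of_ra {H : HalinGraph V} {u v a b x : V}
    (h : (H.T.deleteEdges {s(u,v)}).Reachable u x) :
    Psi H u v a b x = (H.T.dist u x : ℤ) + H.T.dist u a - H.T.dist x a := by
  unfold Psi
  rw [if_pos h]

lemma Psi_of_nra {H : HalinGraph V} {u v a b x : V}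
    (h : ¬ (H.T.deleteEdges {s(u,v)}).Reachable u x) :
    Psi H u v a b x = (H.T.dist v x : ℤ) + H.T.dist v b - H.T.dist x b := by
  unfold Psi
  rw [if_neg h]

lemma walk_bound {G : SimpleGraph V} (Ψ : V → ℤ) (E : Set (Sym2 V))
    (hlip : ∀ x y, G.Adj x y → s(x,y) ∉ E → |Ψ x - Ψ y| ≤ 2) :
    ∀ {x y : V} (W : G.Walk x y), (∀ e ∈ W.edges, e ∉ E) →
      |Ψ x - Ψ y| ≤ 2 * W.length := by
  intro x y W
  induction W with
  | nil => intro _; simp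
  | @cons xx mm yy h t ih =>
    intro hE
    have h1 : |Ψ xx - Ψ mm| ≤ 2 := hlip xx mm h (hE _ (by
      rw [Walk.edges_cons]; exact List.mem_cons_self))
    have h2 := ih (fun e he => hE e (by
      rw [Walk.edges_cons]; exact List.mem_cons_of_mem _ he))
    rw [Walk.length_cons]
    rw [abs_sub_le_iff] at h1 h2 ⊢
    push_cast
    omega

lemma psi_lip (H : HalinGraph V) {u v a b a' b' : V} (huv : H.T.Adj u v)
    (ha : (H.T.deleteEdges {s(u,v)}).Reachable u a)
    (hb : ¬ (H.T.deleteEdges {s(u,v)}).Reachable u b)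
    (hab : H.C.Adj a b)
    (ha' : (H.T.deleteEdges {s(u,v)}).Reachable u a')
    (hb' : ¬ (H.T.deleteEdges {s(u,v)}).Reachable u b')
    (hab' : H.C.Adj a' b') (hne : s(a,b) ≠ s(a',b'))
    (honly : ∀ x y, H.C.Adj x y →
      (H.T.deleteEdges {s(u,v)}).Reachable u x →
      ¬ (H.T.deleteEdges {s(u,v)}).Reachable u y →
      s(x,y) = s(a,b) ∨ s(x,y) = s(a',b')) :
    ∀ x y, H.graph.Adj x y → s(x,y) ≠ s(u,v) → s(x,y) ≠ s(a,b) →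
      |Psi H u v a b x - Psi H u v a b y| ≤ 2 := by
  have hT := H.tree_isTree
  have hswap : s(v,u) = s(u,v) := Sym2.eq_swap
  have hb2 : (H.T.deleteEdges {s(v,u)}).Reachable v b := by
    rw [hswap]
    rcases side_or hT huv b with h | h
    · exact absurd h hb
    · exact h
  have ha2 : ¬ (H.T.deleteEdges {s(v,u)}).Reachable v a := by
    rw [hswap]
    exact fun hc => side_not_both hT huv ha hc
  have hb2' : (H.T.deleteEdges {s(v,u)}).Reachable v b' := by
    rw [hswap]
    rcases side_or hT huv b' with h | h
    · exact absurd h hb'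
    · exact h
  have ha2' : ¬ (H.T.deleteEdges {s(v,u)}).Reachable v a' := by
    rw [hswap]
    exact fun hc => side_not_both hT huv ha' hc
  have hne2 : s(b,a) ≠ s(b',a') := fun h => hne (by
    rw [show s(a,b) = s(b,a) from Sym2.eq_swap, h,
      show s(b',a') = s(a',b') from Sym2.eq_swap])
  have hnra : ∀ x, ¬ (H.T.deleteEdges {s(u,v)}).Reachable u x →
      (H.T.deleteEdges {s(v,u)}).Reachable v x := by
    intro x hx
    rw [hswap]
    rcases side_or hT huv x with h | h
    · exact absurd h hx
    · exact h
  have hnra2 : ∀ x, (H.T.deleteEdges {s(u,v)}).Reachable u x →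
      ¬ (H.T.deleteEdges {s(v,u)}).Reachable v x := by
    intro x hx
    rw [hswap]
    exact fun hc => side_not_both hT huv hx hc
  intro x y hxy hne1 hneab
  rcases hxy with hadj | hadj
  · -- tree edge
    by_cases hx : (H.T.deleteEdges {s(u,v)}).Reachable u x
    · by_cases hy : (H.T.deleteEdges {s(u,v)}).Reachable u y
      · rw [Psi_of_ra hx, Psi_of_ra hy, abs_sub_le_iff]
        have g1 := psi_adj hT hadj u a
        have g2 := psi_adj hT hadj.symm u a
        omega
      · exfalso
        have hdel : (H.T.deleteEdges {s(u,v)}).Adj x y := by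
          rw [deleteEdges_adj]
          exact ⟨hadj, by simpa using hne1⟩
        exact hy (hx.trans hdel.reachable)
    · by_cases hy : (H.T.deleteEdges {s(u,v)}).Reachable u y
      · exfalso
        have hdel : (H.T.deleteEdges {s(u,v)}).Adj x y := by
          rw [deleteEdges_adj]
          exact ⟨hadj, by simpa using hne1⟩
        exact hx (hy.trans hdel.symm.reachable)
      · rw [Psi_of_nra hx, Psi_of_nra hy, abs_sub_le_iff]
        have g1 := psi_adj hT hadj v b
        have g2 := psi_adj hT hadj.symm v b
        omega
  · -- cycle edge
    by_cases hx : (H.T.deleteEdges {s(u,v)}).Reachable u x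
    · by_cases hy : (H.T.deleteEdges {s(u,v)}).Reachable u y
      · rw [Psi_of_ra hx, Psi_of_ra hy, abs_sub_le_iff]
        have g1 := s6 H huv ha hb hab hadj (fun h => hb (h ▸ hy))
        have g2 := s6 H huv ha hb hab hadj.symm (fun h => hb (h ▸ hx))
        omega
      · rcases honly x y hadj hx hy with h | h
        · exact absurd h hneab
        · rcases Sym2.eq_iff.mp h with ⟨h1, h2⟩ | ⟨h1, h2⟩
          · subst h1
            subst h2
            rw [Psi_of_ra hx, Psi_of_nra hy, abs_sub_le_iff]
            have g1 := s4 H huv ha hb hab ha' hb' hab' hne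
            have g2 := s4 H huv.symm hb2 ha2 hab.symm hb2' ha2' hab'.symm hne2
            have g3 := psi_nonneg hT u a x
            have g4 := psi_nonneg hT v b y
            omega
          · exfalso
            rw [h1] at hx
            exact hb' hx
    · by_cases hy : (H.T.deleteEdges {s(u,v)}).Reachable u y
      · rcases honly y x hadj.symm hy hx with h | h
        · exact absurd (h ▸ (Sym2.eq_swap : s(x,y) = s(y,x))) hneab
        · rcases Sym2.eq_iff.mp h with ⟨h1, h2⟩ | ⟨h1, h2⟩
          · subst h1
            subst h2
            rw [Psi_of_ra hy, Psi_of_nra hx, abs_sub_le_iff]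
            have g1 := s4 H huv ha hb hab ha' hb' hab' hne
            have g2 := s4 H huv.symm hb2 ha2 hab.symm hb2' ha2' hab'.symm hne2
            have g3 := psi_nonneg hT u a y
            have g4 := psi_nonneg hT v b x
            omega
          · exfalso
            rw [h1] at hy
            exact hb' hy
      · rw [Psi_of_nra hx, Psi_of_nra hy, abs_sub_le_iff]
        have g1 := s6 H huv.symm hb2 ha2 hab.symm hadj (fun h => (h ▸ hy) ha)
        have g2 := s6 H huv.symm hb2 ha2 hab.symm hadj.symm (fun h => (h ▸ hx) ha)
        omega

lemma aux_main (H : HalinGraph V) {u v a b a' b' : V} (huv : H.T.Adj u v)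
    (ha : (H.T.deleteEdges {s(u,v)}).Reachable u a)
    (hb : ¬ (H.T.deleteEdges {s(u,v)}).Reachable u b)
    (hab : H.C.Adj a b)
    (ha' : (H.T.deleteEdges {s(u,v)}).Reachable u a')
    (hb' : ¬ (H.T.deleteEdges {s(u,v)}).Reachable u b')
    (hab' : H.C.Adj a' b') (hne : s(a,b) ≠ s(a',b'))
    (honly : ∀ x y, H.C.Adj x y →
      (H.T.deleteEdges {s(u,v)}).Reachable u x →
      ¬ (H.T.deleteEdges {s(u,v)}).Reachable u y →
      s(x,y) = s(a,b) ∨ s(x,y) = s(a',b'))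
    (P : H.graph.Walk u v) (hP : P.IsTrail) (heP : s(u,v) ∉ P.edges)
    (hfP : s(a,b) ∈ P.edges) : H.T.dist a b ≤ P.length := by
  have hT := H.tree_isTree
  obtain ⟨a1, b1, W1, W2, hor, hlen, hE1, hE2⟩ := split_at_edge P hP hfP
  set E : Set (Sym2 V) := {s(u,v), s(a,b)} with hE
  have hlip : ∀ x y, H.graph.Adj x y → s(x,y) ∉ E → |Psi H u v a b x - Psi H u v a b y| ≤ 2 := by
    intro x y hxy hmem
    rw [hE, Set.mem_insert_iff, Set.mem_singleton_iff] at hmem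
    push_neg at hmem
    exact psi_lip H huv ha hb hab ha' hb' hab' hne honly x y hxy hmem.1 hmem.2
  have hbound1 := walk_bound (Psi H u v a b) E hlip W1 (by
    intro e he
    rw [hE, Set.mem_insert_iff, Set.mem_singleton_iff]
    push_neg
    obtain ⟨hmem, hneq⟩ := hE1 e he
    exact ⟨fun hc => heP (hc ▸ hmem), hneq⟩)
  have hbound2 := walk_bound (Psi H u v a b) E hlip W2 (by
    intro e he
    rw [hE, Set.mem_insert_iff, Set.mem_singleton_iff]
    push_neg
    obtain ⟨hmem, hneq⟩ := hE2 e he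
    exact ⟨fun hc => heP (hc ▸ hmem), hneq⟩)
  have hu0 : Psi H u v a b u = 0 := by
    rw [Psi_of_ra (Reachable.refl u)]
    rw [SimpleGraph.dist_self]
    push_cast
    omega
  have hv0 : Psi H u v a b v = 0 := by
    rw [Psi_of_nra (not_reach_del hT huv)]
    rw [SimpleGraph.dist_self]
    push_cast
    omega
  have hva : Psi H u v a b a = 2 * H.T.dist u a := by
    rw [Psi_of_ra ha, SimpleGraph.dist_self]
    push_cast
    omega
  have hrb : (H.T.deleteEdges {s(u,v)}).Reachable v b := by
    rcases side_or hT huv b with h | h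
    · exact absurd h hb
    · exact h
  have hvb : Psi H u v a b b = 2 * H.T.dist v b := by
    rw [Psi_of_nra hb, SimpleGraph.dist_self]
    push_cast
    omega
  have hdab : H.T.dist a b = H.T.dist a u + 1 + H.T.dist v b := dist_split hT huv ha hrb
  have hcomm : H.T.dist a u = H.T.dist u a := dist_comm
  rcases hor with ⟨h1, h2⟩ | ⟨h1, h2⟩
  · subst h1; subst h2
    rw [hu0, hva] at hbound1
    rw [hvb, hv0] at hbound2
    rw [abs_sub_le_iff] at hbound1 hbound2
    omega
  · subst h1; subst h2
    rw [hu0, hvb] at hbound1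
    rw [hva, hv0] at hbound2
    rw [abs_sub_le_iff] at hbound1 hbound2
    omega

end Assemble
section Final
variable [Fintype V]

lemma cycle_cons {G : SimpleGraph V} {z : V} (c : G.Walk z z) (hc : c.IsCycle) :
    ∃ (w2 : V) (h : G.Adj z w2) (q : G.Walk w2 z), c = Walk.cons h q := by
  cases c with
  | nil => exact absurd rfl hc.ne_nil
  | cons h q => exact ⟨_, h, q, rfl⟩

lemma length_rotate' [DecidableEq V] {G : SimpleGraph V} {z x : V} (c : G.Walk z z)
    (h : x ∈ c.support) : (c.rotate x h).length = c.length := by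
  have h1 := congrArg Walk.length (Walk.take_spec c h)
  rw [Walk.length_append] at h1
  unfold Walk.rotate
  rw [Walk.length_append]
  omega

lemma cycle_split {G : SimpleGraph V} {z p1 p2 : V} (c : G.Walk z z) (hc : c.IsCycle)
    (hd : ∃ d ∈ c.darts, d.fst = p1 ∧ d.snd = p2) :
    ∃ P : G.Walk p2 p1, P.IsPath ∧ s(p1,p2) ∉ P.edges ∧ P.length + 1 = c.length := by
  classical
  obtain ⟨d, hdm, hf, hs⟩ := hd
  have hp1 : p1 ∈ c.support := by
    have h0 := Walk.dart_fst_mem_support_of_mem_darts c hdm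
    rwa [hf] at h0
  obtain ⟨m, hadjm, q, hq⟩ := cycle_cons (c.rotate p1 hp1) (hc.rotate hp1)
  have hcyc' : (Walk.cons hadjm q).IsCycle := hq ▸ (hc.rotate hp1)
  rw [Walk.cons_isCycle_iff] at hcyc'
  obtain ⟨hqpath, hqe⟩ := hcyc'
  have hdmem : d ∈ (c.rotate p1 hp1).darts := ((Walk.rotate_darts c p1 hp1).mem_iff).mpr hdm
  rw [hq, Walk.darts_cons] at hdmem
  rcases List.mem_cons.mp hdmem with hhd | hhd
  · have hm : m = p2 := by rw [hhd] at hs; exact hs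
    subst hm
    refine ⟨q, hqpath, hqe, ?_⟩
    have hlr := length_rotate' c hp1
    rw [hq, Walk.length_cons] at hlr
    omega
  · exact absurd hf (dart_fst_ne_end hqpath.support_nodup hhd)

lemma normalize (H : HalinGraph V) {u v w1 w2 : V} (huv : H.T.Adj u v)
    (h12 : H.C.Adj w1 w2)
    (hpath : ∀ p : H.T.Walk w1 w2, p.IsPath → s(u,v) ∈ p.edges) :
    ∃ α β, H.C.Adj α β ∧ s(α,β) = s(w1,w2) ∧
      (H.T.deleteEdges {s(u,v)}).Reachable u α ∧
      ¬ (H.T.deleteEdges {s(u,v)}).Reachable u β ∧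
      H.T.dist α β = H.T.dist w1 w2 := by
  have hT := H.tree_isTree
  have hkey : ∀ {x y : V}, (H.T.deleteEdges {s(u,v)}).Reachable x y →
      (∀ p : H.T.Walk x y, p.IsPath → s(u,v) ∈ p.edges) → False := by
    intro x y hr hp
    obtain ⟨p, hpp, hpe⟩ := reach_del_iff.mp hr
    exact hpe (hp p hpp)
  rcases side_or hT huv w1 with h1 | h1
  · rcases side_or hT huv w2 with h2 | h2
    · exact absurd (hkey (h1.symm.trans h2) hpath) not_false
    · exact ⟨w1, w2, h12, rfl, h1, fun hc => side_not_both hT huv hc h2, rfl⟩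
  · rcases side_or hT huv w2 with h2 | h2
    · exact ⟨w2, w1, h12.symm, Sym2.eq_swap, h2,
        fun hc => side_not_both hT huv hc h1, dist_comm⟩
    · exact absurd (hkey (h1.symm.trans h2) hpath) not_false

end Final

end HalinAux

/-- If `e = uv` is a tree edge of a Halin graph with both endpoints non-leaves, and
`w₁w₂`, `w₁'w₂'` are the two outer-cycle edges whose tree paths pass through `e`
(i.e. bound the two bounded faces incident to `e`), then every cycle through `e`
has length at least `min (d_T(w₁, w₂), d_T(w₁', w₂')) + 1`. -/
theorem cycle_through_tree_edge_long {V : Type*} [Fintype V] (H : HalinGraph V)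
    {u v : V} (huv : H.T.Adj u v) (hu : ¬ IsLeaf H.T u) (hv : ¬ IsLeaf H.T v)
    {w1 w2 w1' w2' : V} (h12 : H.C.Adj w1 w2) (h12' : H.C.Adj w1' w2')
    (hne : s(w1, w2) ≠ s(w1', w2'))
    (hpath : ∀ p : H.T.Walk w1 w2, p.IsPath → s(u, v) ∈ p.edges)
    (hpath' : ∀ p : H.T.Walk w1' w2', p.IsPath → s(u, v) ∈ p.edges)
    (honly : ∀ a b : V, H.C.Adj a b →
      (∀ p : H.T.Walk a b, p.IsPath → s(u, v) ∈ p.edges) →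
      s(a, b) = s(w1, w2) ∨ s(a, b) = s(w1', w2'))
    (x : V) (c : H.graph.Walk x x) (hc : c.IsCycle) (he : s(u, v) ∈ c.edges) :
    min (H.T.dist w1 w2) (H.T.dist w1' w2') + 1 ≤ c.length := by
  classical
  have hT := H.tree_isTree
  obtain ⟨P, hPpath, hPe, hPlen⟩ : ∃ P : H.graph.Walk u v, P.IsPath ∧
      s(u,v) ∉ P.edges ∧ P.length + 1 = c.length := by
    obtain ⟨d, hdm, hde⟩ := List.mem_map.mp
      (show s(u,v) ∈ c.darts.map SimpleGraph.Dart.edge from he)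
    rcases (SimpleGraph.dart_edge_eq_mk'_iff).mp hde with hD | hD
    · obtain ⟨P0, h1, h2, h3⟩ := HalinAux.cycle_split c hc
        ⟨d, hdm, congrArg Prod.fst hD, congrArg Prod.snd hD⟩
      refine ⟨P0.reverse, h1.reverse, ?_, by rw [Walk.length_reverse]; exact h3⟩
      rw [Walk.edges_reverse, List.mem_reverse]
      exact h2
    · obtain ⟨P0, h1, h2, h3⟩ := HalinAux.cycle_split c hc
        ⟨d, hdm, congrArg Prod.fst hD, congrArg Prod.snd hD⟩
      refine ⟨P0, h1, ?_, h3⟩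
      rw [show s(u,v) = s(v,u) from Sym2.eq_swap]
      exact h2
  obtain ⟨α, β, hαβ, hsym1, hra, hrb, hdist1⟩ := HalinAux.normalize H huv h12 hpath
  obtain ⟨α', β', hαβ', hsym1', hra', hrb', hdist1'⟩ := HalinAux.normalize H huv h12' hpath'
  have hne' : s(α,β) ≠ s(α',β') := by rw [hsym1, hsym1']; exact hne
  have honly' : ∀ x y, H.C.Adj x y → (H.T.deleteEdges {s(u,v)}).Reachable u x →
      ¬ (H.T.deleteEdges {s(u,v)}).Reachable u y →
      s(x,y) = s(α,β) ∨ s(x,y) = s(α',β') := by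
    intro x y hxy hx hy
    have hcross : ∀ p : H.T.Walk x y, p.IsPath → s(u,v) ∈ p.edges := by
      intro p hp
      by_contra hmem
      exact hy (hx.trans (HalinAux.reach_del_of_walk p hmem))
    rcases honly x y hxy hcross with h | h
    · exact Or.inl (h.trans hsym1.symm)
    · exact Or.inr (h.trans hsym1'.symm)
  obtain ⟨dd, hddm, hddf, hdds⟩ := P.exists_boundary_dart
    {x | (H.T.deleteEdges {s(u,v)}).Reachable u x} (Reachable.refl u)
    (HalinAux.not_reach_del hT huv)
  have hedge_mem : s(dd.fst, dd.snd) ∈ P.edges := by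
    have h0 : dd.edge ∈ P.edges := List.mem_map_of_mem hddm
    exact h0
  have hddf' : (H.T.deleteEdges {s(u,v)}).Reachable u dd.fst := hddf
  have hdds' : ¬ (H.T.deleteEdges {s(u,v)}).Reachable u dd.snd := hdds
  have hddC : H.C.Adj dd.fst dd.snd := by
    rcases dd.adj with h | h
    · exfalso
      have hneq : s(dd.fst, dd.snd) ≠ s(u,v) := fun hcon => hPe (hcon ▸ hedge_mem)
      have hdel : (H.T.deleteEdges {s(u,v)}).Adj dd.fst dd.snd := by
        rw [SimpleGraph.deleteEdges_adj]
        exact ⟨h, by simpa using hneq⟩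
      exact hdds' (hddf'.trans hdel.reachable)
    · exact h
  have hmin : min (H.T.dist w1 w2) (H.T.dist w1' w2') ≤ P.length := by
    rcases honly' dd.fst dd.snd hddC hddf' hdds' with h | h
    · have hb := HalinAux.aux_main H huv hra hrb hαβ hra' hrb' hαβ' hne' honly' P
        hPpath.isTrail hPe (h ▸ hedge_mem)
      omega
    · have honly'' : ∀ x y, H.C.Adj x y → (H.T.deleteEdges {s(u,v)}).Reachable u x →
          ¬ (H.T.deleteEdges {s(u,v)}).Reachable u y →
          s(x,y) = s(α',β') ∨ s(x,y) = s(α,β) :=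
        fun x y h1 h2 h3 => (honly' x y h1 h2 h3).symm
      have hb := HalinAux.aux_main H huv hra' hrb' hαβ' hra hrb hαβ hne'.symm honly'' P
        hPpath.isTrail hPe (h ▸ hedge_mem)
      omega
  omega
end
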